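/- arXiv:1907.11417 — 3 statements merged into one kernel-verified Lean document; each statement's English description precedes it below -/
import Mathlib

section
/- For every basic rotation r (rotating the leftmost or rightmost point of one row to the other row, with color inversion) and every two-colored partition p, the analyzer is invariant: Z({p^r}) = Z({p}), where Z = (F, V, Σ, L, K, X). -/
noncomputable section
attribute [local instance] Classical.propDecidable

/-- A two-colored partition: two rows of points colored white (`true`) or black (`false`),
together with a set partition (setoid) of all points into blocks. -/
structure TCP where
  upper : ℕ
  lower : ℕ
  upColor : Fin upper → Bool
  loColor : Fin lower → Bool
  rel : Setoid (Fin upper ⊕ Fin lower)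

namespace TCP

/-- The points of a partition. -/
abbrev Point (p : TCP) := Fin p.upper ⊕ Fin p.lower

/-- Native color of a point. -/
def color (p : TCP) : p.Point → Bool
  | .inl j => p.upColor j
  | .inr i => p.loColor i

/-- Normalized color: inverted on the upper row. -/
def ncolor (p : TCP) : p.Point → Bool
  | .inl j => !(p.upColor j)
  | .inr i => p.loColor i

/-- Sign of a point: `+1` for normalized white, `-1` for normalized black. -/
def sgn (p : TCP) (x : p.Point) : ℤ := if p.ncolor x then 1 else -1

/-- Color sum of a finite set of points. -/
def csum (p : TCP) (S : Finset p.Point) : ℤ := ∑ x ∈ S, p.sgn x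

/-- Total color sum Σ(p). -/
def tsum (p : TCP) : ℤ := p.csum Finset.univ

/-- Total number of points. -/
def size (p : TCP) : ℕ := p.upper + p.lower

/-- Position in the counter-clockwise cyclic order: lower points left to right,
then upper points right to left. -/
def pos (p : TCP) : p.Point → ℕ
  | .inr i => i
  | .inl j => p.lower + (p.upper - 1 - j)

/-- Cyclic position of `y` relative to `x`. -/
def relpos (p : TCP) (x y : p.Point) : ℕ := (p.size + p.pos y - p.pos x) % p.size

/-- Half-open cyclic interval `]x,y]`. -/
def Ioc (p : TCP) (x y : p.Point) : Finset p.Point :=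
  Finset.univ.filter (fun z => 0 < p.relpos x z ∧ p.relpos x z ≤ p.relpos x y)

/-- Open cyclic interval `]x,y[`. -/
def Ioo (p : TCP) (x y : p.Point) : Finset p.Point :=
  Finset.univ.filter (fun z => 0 < p.relpos x z ∧ p.relpos x z < p.relpos x y)

/-- The color distance between two points. -/
def cdist (p : TCP) (x y : p.Point) : ℤ :=
  if x = y then p.tsum
  else if p.ncolor x = p.ncolor y then p.csum (p.Ioc x y)
  else p.csum (p.Ioo x y)

/-- The block of a point. -/
def blockOf (p : TCP) (x : p.Point) : Finset p.Point :=
  Finset.univ.filter (fun y => p.rel.r x y)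

/-- A finite set of points is a block of `p`. -/
def IsBlock (p : TCP) (B : Finset p.Point) : Prop := ∃ x, B = p.blockOf x

/-- `(a,b,c,d)` is ordered in the cyclic order of `p`. -/
def Ordered4 (p : TCP) (a b c d : p.Point) : Prop :=
  0 < p.relpos a b ∧ p.relpos a b < p.relpos a c ∧ p.relpos a c < p.relpos a d

/-- Two sets of points cross each other. -/
def Cross (p : TCP) (B₁ B₂ : Finset p.Point) : Prop :=
  ∃ a ∈ B₁, ∃ b ∈ B₁, ∃ a' ∈ B₂, ∃ b' ∈ B₂, p.Ordered4 a a' b b'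

/-! ### The analyzer -/

/-- Set of block sizes. -/
def Fset (S : Set TCP) : Set ℕ :=
  {n | ∃ p ∈ S, ∃ B : Finset p.Point, p.IsBlock B ∧ B.card = n}

/-- Set of block color sums. -/
def Vset (S : Set TCP) : Set ℤ :=
  {v | ∃ p ∈ S, ∃ B : Finset p.Point, p.IsBlock B ∧ p.csum B = v}

/-- Set of total color sums. -/
def Sset (S : Set TCP) : Set ℤ := {s | ∃ p ∈ S, p.tsum = s}

/-- Set of color distances between cyclically subsequent legs of the same block
having the same normalized color. -/
def Lset (S : Set TCP) : Set ℤ :=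
  {d | ∃ p ∈ S, ∃ B : Finset p.Point, p.IsBlock B ∧ ∃ a ∈ B, ∃ b ∈ B, a ≠ b ∧
        p.Ioo a b ∩ B = ∅ ∧ p.ncolor a = p.ncolor b ∧ p.cdist a b = d}

/-- Set of color distances between cyclically subsequent legs of the same block
having different normalized colors. -/
def Kset (S : Set TCP) : Set ℤ :=
  {d | ∃ p ∈ S, ∃ B : Finset p.Point, p.IsBlock B ∧ ∃ a ∈ B, ∃ b ∈ B, a ≠ b ∧
        p.Ioo a b ∩ B = ∅ ∧ p.ncolor a ≠ p.ncolor b ∧ p.cdist a b = d}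

/-- Set of color distances between legs of two crossing blocks. -/
def Xset (S : Set TCP) : Set ℤ :=
  {d | ∃ p ∈ S, ∃ B₁ B₂ : Finset p.Point, p.IsBlock B₁ ∧ p.IsBlock B₂ ∧ B₁ ≠ B₂ ∧
        p.Cross B₁ B₂ ∧ ∃ a ∈ B₁, ∃ b ∈ B₂, p.cdist a b = d}

/-- The parameter domain. -/
abbrev Param := Set ℕ × Set ℤ × Set ℤ × Set ℤ × Set ℤ × Set ℤ

/-- The analyzer `Z = (F, V, Σ, L, K, X)`. -/
def Z (S : Set TCP) : Param := (Fset S, Vset S, Sset S, Lset S, Kset S, Xset S)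

/-! ### Operations on partitions -/

/-- Componentwise relation on a sum type. -/
def sumRel {α β : Type*} (s : α → α → Prop) (t : β → β → Prop) : α ⊕ β → α ⊕ β → Prop
  | .inl a, .inl b => s a b
  | .inr a, .inr b => t a b
  | _, _ => False

/-- Componentwise setoid on a sum type. -/
def sumSetoid {α β : Type*} (s : Setoid α) (t : Setoid β) : Setoid (α ⊕ β) where
  r := sumRel s.r t.r
  iseqv := by
    refine ⟨?_, ?_, ?_⟩
    · rintro (a | a) <;> exact Setoid.refl _
    · rintro (a | a) (b | b) h <;> first | exact Setoid.symm h | exact h.elim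
    · rintro (a | a) (b | b) (c | c) h₁ h₂ <;>
        first | exact Setoid.trans h₁ h₂ | exact h₁.elim | exact h₂.elim

/-- Identification of the points of a tensor product with a sum of points. -/
def ptmap (p q : TCP) :
    (Fin (p.upper + q.upper) ⊕ Fin (p.lower + q.lower)) → (p.Point ⊕ q.Point)
  | .inl j => (finSumFinEquiv.symm j).elim (fun a => .inl (.inl a)) (fun a => .inr (.inl a))
  | .inr i => (finSumFinEquiv.symm i).elim (fun a => .inl (.inr a)) (fun a => .inr (.inr a))

/-- Tensor product: horizontal concatenation. -/
def tensor (p q : TCP) : TCP where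
  upper := p.upper + q.upper
  lower := p.lower + q.lower
  upColor := fun j => (finSumFinEquiv.symm j).elim p.upColor q.upColor
  loColor := fun i => (finSumFinEquiv.symm i).elim p.loColor q.loColor
  rel := Setoid.comap (ptmap p q) (sumSetoid p.rel q.rel)

/-- Embedding of the points of `p` into the points of `p.tensor q`. -/
def tinl (p q : TCP) : p.Point → (p.tensor q).Point
  | .inl j => Sum.inl (Fin.castAdd q.upper j)
  | .inr i => Sum.inr (Fin.castAdd q.lower i)

/-- Embedding of the points of `q` into the points of `p.tensor q`. -/
def tinr (p q : TCP) : q.Point → (p.tensor q).Point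
  | .inl j => Sum.inl (Fin.natAdd p.upper j)
  | .inr i => Sum.inr (Fin.natAdd p.lower i)

/-- Involution: swapping the rows. -/
def invol (p : TCP) : TCP where
  upper := p.lower
  lower := p.upper
  upColor := p.loColor
  loColor := p.upColor
  rel := Setoid.comap Sum.swap p.rel

/-- `(p, q)` is composable: the upper row of `p` matches the lower row of `q`. -/
structure Composable (p q : TCP) : Prop where
  len : p.upper = q.lower
  col : ∀ j : Fin p.upper, p.upColor j = q.loColor (Fin.cast len j)

/-- Generating relation for the composition of `p` and `q`. -/
def compRel (p q : TCP) (h : p.upper = q.lower) :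
    (q.Point ⊕ p.Point) → (q.Point ⊕ p.Point) → Prop := fun x y =>
  (∃ a b, x = .inl a ∧ y = .inl b ∧ q.rel.r a b) ∨
  (∃ a b, x = .inr a ∧ y = .inr b ∧ p.rel.r a b) ∨
  (∃ j : Fin p.upper, x = .inl (.inr (Fin.cast h j)) ∧ y = .inr (.inl j)) ∨
  (∃ j : Fin p.upper, y = .inl (.inr (Fin.cast h j)) ∧ x = .inr (.inl j))

/-- Composition: vertical concatenation, with blocks joined along the middle row. -/
def comp (p q : TCP) (h : Composable p q) : TCP where
  upper := q.upper
  lower := p.lower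
  upColor := q.upColor
  loColor := p.loColor
  rel := Setoid.comap
    (fun x : Fin q.upper ⊕ Fin p.lower => match x with
      | .inl j => Sum.inl (Sum.inl j : q.Point)
      | .inr i => Sum.inr (Sum.inr i : p.Point))
    (Relation.EqvGen.setoid (compRel p q h.len))

/-- The empty partition. -/
def emptyP : TCP := ⟨0, 0, Fin.elim0, Fin.elim0, ⊤⟩

/-- The identity partition of color `c`: one upper and one lower point of color `c`
joined in one block. -/
def idPart (c : Bool) : TCP := ⟨1, 1, fun _ => c, fun _ => c, ⊤⟩

/-- The one-row pair partition with two lower points of colors `c₁`, `c₂` in one block. -/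
def lpair (c₁ c₂ : Bool) : TCP := ⟨0, 2, Fin.elim0, fun i => if i = 0 then c₁ else c₂, ⊤⟩

/-- A category of two-colored partitions. -/
def IsCategory (C : Set TCP) : Prop :=
  emptyP ∈ C ∧ idPart true ∈ C ∧ idPart false ∈ C ∧
  lpair true false ∈ C ∧ lpair false true ∈ C ∧
  (∀ p q, p ∈ C → q ∈ C → p.tensor q ∈ C) ∧
  (∀ p, p ∈ C → p.invol ∈ C) ∧
  (∀ p q (h : Composable p q), p ∈ C → q ∈ C → comp p q h ∈ C)

/-! ### Rotations, verticolor reflection, erasing -/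

/-- Rotate the leftmost upper point down (identity if the upper row is empty). -/
def rotDownL (p : TCP) : TCP :=
  if h : 0 < p.upper then
    { upper := p.upper - 1
      lower := p.lower + 1
      upColor := fun j => p.upColor ⟨j + 1, by have := j.isLt; omega⟩
      loColor := fun i => Fin.cases (!(p.upColor ⟨0, h⟩)) (fun i' => p.loColor i') i
      rel := Setoid.comap
        (fun x : Fin (p.upper - 1) ⊕ Fin (p.lower + 1) => match x with
          | .inl j => (Sum.inl ⟨j + 1, by have := j.isLt; omega⟩ : p.Point)
          | .inr i => Fin.cases (Sum.inl ⟨0, h⟩ : p.Point) (fun i' => (Sum.inr i' : p.Point)) i)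
        p.rel }
  else p

/-- Rotate the rightmost upper point down (identity if the upper row is empty). -/
def rotDownR (p : TCP) : TCP :=
  if h : 0 < p.upper then
    { upper := p.upper - 1
      lower := p.lower + 1
      upColor := fun j => p.upColor ⟨j, by have := j.isLt; omega⟩
      loColor := fun i =>
        Fin.lastCases (!(p.upColor ⟨p.upper - 1, by omega⟩)) (fun i' => p.loColor i') i
      rel := Setoid.comap
        (fun x : Fin (p.upper - 1) ⊕ Fin (p.lower + 1) => match x with
          | .inl j => (Sum.inl ⟨j, by have := j.isLt; omega⟩ : p.Point)
          | .inr i => Fin.lastCases (Sum.inl ⟨p.upper - 1, by omega⟩ : p.Point)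
              (fun i' => (Sum.inr i' : p.Point)) i)
        p.rel }
  else p

/-- Rotate the leftmost lower point up (identity if the lower row is empty). -/
def rotUpL (p : TCP) : TCP :=
  if h : 0 < p.lower then
    { upper := p.upper + 1
      lower := p.lower - 1
      upColor := fun j => Fin.cases (!(p.loColor ⟨0, h⟩)) (fun j' => p.upColor j') j
      loColor := fun i => p.loColor ⟨i + 1, by have := i.isLt; omega⟩
      rel := Setoid.comap
        (fun x : Fin (p.upper + 1) ⊕ Fin (p.lower - 1) => match x with
          | .inl j => Fin.cases (Sum.inr ⟨0, h⟩ : p.Point) (fun j' => (Sum.inl j' : p.Point)) j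
          | .inr i => (Sum.inr ⟨i + 1, by have := i.isLt; omega⟩ : p.Point))
        p.rel }
  else p

/-- Rotate the rightmost lower point up (identity if the lower row is empty). -/
def rotUpR (p : TCP) : TCP :=
  if h : 0 < p.lower then
    { upper := p.upper + 1
      lower := p.lower - 1
      upColor := fun j =>
        Fin.lastCases (!(p.loColor ⟨p.lower - 1, by omega⟩)) (fun j' => p.upColor j') j
      loColor := fun i => p.loColor ⟨i, by have := i.isLt; omega⟩
      rel := Setoid.comap
        (fun x : Fin (p.upper + 1) ⊕ Fin (p.lower - 1) => match x with
          | .inl j => Fin.lastCases (Sum.inr ⟨p.lower - 1, by omega⟩ : p.Point)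
              (fun j' => (Sum.inl j' : p.Point)) j
          | .inr i => (Sum.inr ⟨i, by have := i.isLt; omega⟩ : p.Point))
        p.rel }
  else p

/-- Verticolor reflection: reverse both rows and invert all colors. -/
def vreflect (p : TCP) : TCP where
  upper := p.upper
  lower := p.lower
  upColor := fun j => !(p.upColor j.rev)
  loColor := fun i => !(p.loColor i.rev)
  rel := Setoid.comap (Sum.map Fin.rev Fin.rev) p.rel

/-- `{a, b}` is a turn: two cyclically consecutive points of inverse normalized colors. -/
def IsTurn (p : TCP) (a b : p.Point) : Prop :=
  p.relpos a b = 1 ∧ p.ncolor a ≠ p.ncolor b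

/-- `e` identifies the points of `q` with the points of `p` outside `{a, b}`, preserving
rows, colors and order, and `q` carries the block structure obtained from `p` by erasing
`{a, b}` and merging all blocks meeting `{a, b}`. -/
def IsErasingMap (p : TCP) (a b : p.Point) (q : TCP) (e : q.Point → p.Point) : Prop :=
  Function.Injective e ∧
  Set.range e = {x | x ≠ a ∧ x ≠ b} ∧
  (∀ j : Fin q.upper, ∃ j', e (.inl j) = Sum.inl j') ∧
  (∀ i : Fin q.lower, ∃ i', e (.inr i) = Sum.inr i') ∧
  (∀ j₁ j₂ : Fin q.upper, ∀ j₁' j₂' : Fin p.upper,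
    e (.inl j₁) = Sum.inl j₁' → e (.inl j₂) = Sum.inl j₂' → (j₁ < j₂ ↔ j₁' < j₂')) ∧
  (∀ i₁ i₂ : Fin q.lower, ∀ i₁' i₂' : Fin p.lower,
    e (.inr i₁) = Sum.inr i₁' → e (.inr i₂) = Sum.inr i₂' → (i₁ < i₂ ↔ i₁' < i₂')) ∧
  (∀ x, q.color x = p.color (e x)) ∧
  (∀ x y, q.rel.r x y ↔
    (p.rel.r (e x) (e y) ∨
      ((p.rel.r (e x) a ∨ p.rel.r (e x) b) ∧ (p.rel.r (e y) a ∨ p.rel.r (e y) b))))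

/-- `q` is obtained from `p` by erasing the turn `{a, b}`. -/
def IsErasing (p : TCP) (a b : p.Point) (q : TCP) : Prop :=
  p.IsTurn a b ∧ ∃ e : q.Point → p.Point, IsErasingMap p a b q e

lemma mod_eq_of_diff (N x y : ℕ) (h : x = y ∨ x + N = y ∨ y + N = x) : x % N = y % N := by
  rcases h with h | h | h
  · rw [h]
  · rw [← h, Nat.add_mod_right]
  · rw [← h, Nat.add_mod_right]

lemma pos_lt (p : TCP) (z : p.Point) : p.pos z < p.size := by
  rcases z with j | i
  · have := j.isLt; simp only [pos, size]; omega
  · have := i.isLt; simp only [pos, size]; omega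

/-- An isomorphism of two-colored partitions: a bijection of points preserving the
cyclic order, the normalized colors and the block structure. -/
structure Iso (q p : TCP) where
  φ : q.Point ≃ p.Point
  relpos_eq : ∀ x y, p.relpos (φ x) (φ y) = q.relpos x y
  ncolor_eq : ∀ x, p.ncolor (φ x) = q.ncolor x
  rel_iff : ∀ x y, p.rel.r (φ x) (φ y) ↔ q.rel.r x y

namespace Iso

variable {q p : TCP}

def symm (e : Iso q p) : Iso p q where
  φ := e.φ.symm
  relpos_eq x y := by
    simpa using (e.relpos_eq (e.φ.symm x) (e.φ.symm y)).symm
  ncolor_eq x := by simpa using (e.ncolor_eq (e.φ.symm x)).symm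
  rel_iff x y := by simpa using (e.rel_iff (e.φ.symm x) (e.φ.symm y)).symm

lemma sgn_eq (e : Iso q p) (x : q.Point) : p.sgn (e.φ x) = q.sgn x := by
  unfold sgn; rw [e.ncolor_eq]

lemma csum_image (e : Iso q p) (B : Finset q.Point) : p.csum (B.image e.φ) = q.csum B := by
  unfold csum
  rw [Finset.sum_image (fun a _ b _ hab => e.φ.injective hab)]
  exact Finset.sum_congr rfl fun x _ => e.sgn_eq x

lemma univ_image (e : Iso q p) :
    (Finset.univ : Finset q.Point).image e.φ = Finset.univ := by
  ext z
  simp only [Finset.mem_image, Finset.mem_univ, true_and, iff_true]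
  exact ⟨e.φ.symm z, e.φ.apply_symm_apply z⟩

lemma tsum_eq (e : Iso q p) : p.tsum = q.tsum := by
  unfold tsum; rw [← e.univ_image, e.csum_image]

lemma Ioc_image (e : Iso q p) (x y : q.Point) :
    p.Ioc (e.φ x) (e.φ y) = (q.Ioc x y).image e.φ := by
  ext z
  simp only [Ioc, Finset.mem_image, Finset.mem_filter, Finset.mem_univ, true_and]
  constructor
  · rintro ⟨h1, h2⟩
    refine ⟨e.φ.symm z, ⟨?_, ?_⟩, e.φ.apply_symm_apply z⟩
    · rw [← e.relpos_eq, e.φ.apply_symm_apply]; exact h1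
    · rw [← e.relpos_eq x (e.φ.symm z), ← e.relpos_eq x y, e.φ.apply_symm_apply]; exact h2
  · rintro ⟨w, ⟨h1, h2⟩, rfl⟩
    rw [e.relpos_eq, e.relpos_eq]; exact ⟨h1, h2⟩

lemma Ioo_image (e : Iso q p) (x y : q.Point) :
    p.Ioo (e.φ x) (e.φ y) = (q.Ioo x y).image e.φ := by
  ext z
  simp only [Ioo, Finset.mem_image, Finset.mem_filter, Finset.mem_univ, true_and]
  constructor
  · rintro ⟨h1, h2⟩
    refine ⟨e.φ.symm z, ⟨?_, ?_⟩, e.φ.apply_symm_apply z⟩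
    · rw [← e.relpos_eq, e.φ.apply_symm_apply]; exact h1
    · rw [← e.relpos_eq x (e.φ.symm z), ← e.relpos_eq x y, e.φ.apply_symm_apply]; exact h2
  · rintro ⟨w, ⟨h1, h2⟩, rfl⟩
    rw [e.relpos_eq, e.relpos_eq]; exact ⟨h1, h2⟩

lemma cdist_eq (e : Iso q p) (x y : q.Point) :
    p.cdist (e.φ x) (e.φ y) = q.cdist x y := by
  unfold cdist
  simp only [e.ncolor_eq, Equiv.apply_eq_iff_eq, e.Ioc_image, e.Ioo_image,
    e.csum_image, e.tsum_eq]

lemma blockOf_image (e : Iso q p) (x : q.Point) :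
    p.blockOf (e.φ x) = (q.blockOf x).image e.φ := by
  ext z
  simp only [blockOf, Finset.mem_image, Finset.mem_filter, Finset.mem_univ, true_and]
  constructor
  · intro h1
    refine ⟨e.φ.symm z, ?_, e.φ.apply_symm_apply z⟩
    rw [← e.rel_iff, e.φ.apply_symm_apply]; exact h1
  · rintro ⟨w, h1, rfl⟩
    rw [e.rel_iff]; exact h1

lemma isBlock_image (e : Iso q p) {B : Finset q.Point} (hB : q.IsBlock B) :
    p.IsBlock (B.image e.φ) := by
  obtain ⟨x, rfl⟩ := hB
  exact ⟨e.φ x, (e.blockOf_image x).symm ▸ rfl⟩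

lemma ordered4 (e : Iso q p) {a b c d : q.Point} (h : q.Ordered4 a b c d) :
    p.Ordered4 (e.φ a) (e.φ b) (e.φ c) (e.φ d) := by
  unfold Ordered4 at *
  rw [e.relpos_eq, e.relpos_eq, e.relpos_eq]; exact h

lemma cross (e : Iso q p) {B₁ B₂ : Finset q.Point} (h : q.Cross B₁ B₂) :
    p.Cross (B₁.image e.φ) (B₂.image e.φ) := by
  obtain ⟨a, ha, b, hb, a', ha', b', hb', ho⟩ := h
  exact ⟨e.φ a, Finset.mem_image_of_mem _ ha, e.φ b, Finset.mem_image_of_mem _ hb,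
    e.φ a', Finset.mem_image_of_mem _ ha', e.φ b', Finset.mem_image_of_mem _ hb',
    e.ordered4 ho⟩

lemma Fsub (e : Iso q p) : Fset {q} ⊆ Fset {p} := by
  rintro n ⟨p', rfl, B, hB, hc⟩
  exact ⟨p, rfl, B.image e.φ, e.isBlock_image hB,
    by rw [Finset.card_image_of_injective _ e.φ.injective]; exact hc⟩

lemma Vsub (e : Iso q p) : Vset {q} ⊆ Vset {p} := by
  rintro v ⟨p', rfl, B, hB, hv⟩
  exact ⟨p, rfl, B.image e.φ, e.isBlock_image hB, by rw [e.csum_image]; exact hv⟩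

lemma Ssub (e : Iso q p) : Sset {q} ⊆ Sset {p} := by
  rintro s ⟨p', rfl, hs⟩
  exact ⟨p, rfl, by rw [e.tsum_eq]; exact hs⟩

lemma Lsub (e : Iso q p) : Lset {q} ⊆ Lset {p} := by
  rintro d ⟨p', rfl, B, hB, a, ha, b, hb, hab, hIoo, hcol, hd⟩
  refine ⟨p, rfl, B.image e.φ, e.isBlock_image hB, e.φ a, Finset.mem_image_of_mem _ ha,
    e.φ b, Finset.mem_image_of_mem _ hb, fun hc => hab (e.φ.injective hc), ?_, ?_, ?_⟩
  · rw [e.Ioo_image, ← Finset.image_inter _ _ e.φ.injective, hIoo, Finset.image_empty]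
  · rw [e.ncolor_eq, e.ncolor_eq]; exact hcol
  · rw [e.cdist_eq]; exact hd

lemma Ksub (e : Iso q p) : Kset {q} ⊆ Kset {p} := by
  rintro d ⟨p', rfl, B, hB, a, ha, b, hb, hab, hIoo, hcol, hd⟩
  refine ⟨p, rfl, B.image e.φ, e.isBlock_image hB, e.φ a, Finset.mem_image_of_mem _ ha,
    e.φ b, Finset.mem_image_of_mem _ hb, fun hc => hab (e.φ.injective hc), ?_, ?_, ?_⟩
  · rw [e.Ioo_image, ← Finset.image_inter _ _ e.φ.injective, hIoo, Finset.image_empty]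
  · rw [e.ncolor_eq, e.ncolor_eq]; exact hcol
  · rw [e.cdist_eq]; exact hd

lemma Xsub (e : Iso q p) : Xset {q} ⊆ Xset {p} := by
  rintro d ⟨p', rfl, B₁, B₂, h₁, h₂, hne, hcr, a, ha, b, hb, hd⟩
  refine ⟨p, rfl, B₁.image e.φ, B₂.image e.φ, e.isBlock_image h₁, e.isBlock_image h₂,
    fun hc => hne (Finset.image_injective e.φ.injective hc), e.cross hcr,
    e.φ a, Finset.mem_image_of_mem _ ha, e.φ b, Finset.mem_image_of_mem _ hb,
    by rw [e.cdist_eq]; exact hd⟩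

lemma Z_eq (e : Iso q p) : Z {q} = Z {p} := by
  have e' := e.symm
  simp only [Z, Prod.mk.injEq]
  exact ⟨subset_antisymm e.Fsub e'.Fsub, subset_antisymm e.Vsub e'.Vsub,
    subset_antisymm e.Ssub e'.Ssub, subset_antisymm e.Lsub e'.Lsub,
    subset_antisymm e.Ksub e'.Ksub, subset_antisymm e.Xsub e'.Xsub⟩

end Iso
section DownL
variable (p : TCP) (h : 0 < p.upper)

/-- The explicit form of `rotDownL` in the nontrivial case. -/
def qDL : TCP :=
  { upper := p.upper - 1
    lower := p.lower + 1
    upColor := fun j => p.upColor ⟨j + 1, by have := j.isLt; omega⟩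
    loColor := fun i => Fin.cases (!(p.upColor ⟨0, h⟩)) (fun i' => p.loColor i') i
    rel := Setoid.comap
      (fun x : Fin (p.upper - 1) ⊕ Fin (p.lower + 1) => match x with
        | .inl j => (Sum.inl ⟨j + 1, by have := j.isLt; omega⟩ : p.Point)
        | .inr i => Fin.cases (Sum.inl ⟨0, h⟩ : p.Point) (fun i' => (Sum.inr i' : p.Point)) i)
      p.rel }

lemma rotDownL_eq : p.rotDownL = qDL p h := by
  unfold rotDownL qDL; rw [dif_pos h]

/-- The point identification underlying `rotDownL`. -/
def fDL : Fin (p.upper - 1) ⊕ Fin (p.lower + 1) → p.Point := fun x => match x with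
  | .inl j => (Sum.inl ⟨j + 1, by have := j.isLt; omega⟩ : p.Point)
  | .inr i => Fin.cases (Sum.inl ⟨0, h⟩ : p.Point) (fun i' => (Sum.inr i' : p.Point)) i

lemma fDL_bij : Function.Bijective (fDL p h) := by
  rw [Fintype.bijective_iff_injective_and_card]
  constructor
  · rintro (j₁ | i₁) (j₂ | i₂) heq
    · simp only [fDL, Sum.inl.injEq, Fin.mk.injEq] at heq
      simp only [Sum.inl.injEq]
      exact Fin.ext (by omega)
    · induction i₂ using Fin.cases with
      | zero => simp only [fDL, Fin.cases_zero, Sum.inl.injEq, Fin.mk.injEq] at heq; omega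
      | succ i' => simp only [fDL, Fin.cases_succ] at heq; exact absurd heq (by simp)
    · induction i₁ using Fin.cases with
      | zero => simp only [fDL, Fin.cases_zero, Sum.inl.injEq, Fin.mk.injEq] at heq; omega
      | succ i' => simp only [fDL, Fin.cases_succ] at heq; exact absurd heq (by simp)
    · induction i₁ using Fin.cases with
      | zero =>
        induction i₂ using Fin.cases with
        | zero => rfl
        | succ i' => simp only [fDL, Fin.cases_zero, Fin.cases_succ] at heq
                     exact absurd heq (by simp)
      | succ i' =>
        induction i₂ using Fin.cases with
        | zero => simp only [fDL, Fin.cases_zero, Fin.cases_succ] at heq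
                  exact absurd heq (by simp)
        | succ i'' =>
          simp only [fDL, Fin.cases_succ, Sum.inr.injEq] at heq
          simp [heq]
  · simp only [Point, qDL, Fintype.card_sum, Fintype.card_fin]
    omega

lemma size_qDL : (qDL p h).size = p.size := by
  simp only [size, qDL]; omega

lemma posDL (z : (qDL p h).Point) :
    p.pos (fDL p h z) + 1 = (qDL p h).pos z ∨
      p.pos (fDL p h z) + 1 = (qDL p h).pos z + p.size := by
  rcases z with j | i
  · left
    have hj : (j : ℕ) < p.upper - 1 := j.isLt
    simp only [fDL, pos, qDL, size]
    omega
  · induction i using Fin.cases with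
    | zero =>
      right
      simp only [fDL, Fin.cases_zero, pos, qDL, size, Fin.val_zero]
      omega
    | succ i' =>
      left
      simp only [fDL, Fin.cases_succ, pos, qDL, Fin.val_succ]

lemma isoDL : Nonempty (Iso (qDL p h) p) := by
  refine ⟨⟨Equiv.ofBijective _ (fDL_bij p h), fun x y => ?_, fun z => ?_, fun x y => by rcases x with j | i <;> rcases y with j' | i' <;> exact Iff.rfl⟩⟩
  · have hx := posDL p h x
    have hy := posDL p h y
    have bx := pos_lt p (fDL p h x)
    have by' := pos_lt p (fDL p h y)
    have cx := pos_lt (qDL p h) x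
    have cy := pos_lt (qDL p h) y
    rw [size_qDL] at cx cy
    show p.relpos (fDL p h x) (fDL p h y) = (qDL p h).relpos x y
    simp only [Equiv.ofBijective_apply, relpos, size_qDL]
    apply mod_eq_of_diff
    omega
  · show p.ncolor (fDL p h z) = (qDL p h).ncolor z
    rcases z with j | i
    · simp [fDL, ncolor, qDL]
    · induction i using Fin.cases with
      | zero => simp [fDL, ncolor, qDL]
      | succ i' => simp [fDL, ncolor, qDL]

end DownL
section DownR
variable (p : TCP) (h : 0 < p.upper)

/-- The explicit form of `rotDownR` in the nontrivial case. -/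
def qDR : TCP :=
  { upper := p.upper - 1
    lower := p.lower + 1
    upColor := fun j => p.upColor ⟨j, by have := j.isLt; omega⟩
    loColor := fun i =>
      Fin.lastCases (!(p.upColor ⟨p.upper - 1, by omega⟩)) (fun i' => p.loColor i') i
    rel := Setoid.comap
      (fun x : Fin (p.upper - 1) ⊕ Fin (p.lower + 1) => match x with
        | .inl j => (Sum.inl ⟨j, by have := j.isLt; omega⟩ : p.Point)
        | .inr i => Fin.lastCases (Sum.inl ⟨p.upper - 1, by omega⟩ : p.Point)
            (fun i' => (Sum.inr i' : p.Point)) i)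
      p.rel }

lemma rotDownR_eq : p.rotDownR = qDR p h := by
  unfold rotDownR qDR; rw [dif_pos h]

/-- The point identification underlying `rotDownR`. -/
def fDR : Fin (p.upper - 1) ⊕ Fin (p.lower + 1) → p.Point := fun x => match x with
  | .inl j => (Sum.inl ⟨j, by have := j.isLt; omega⟩ : p.Point)
  | .inr i => Fin.lastCases (Sum.inl ⟨p.upper - 1, by omega⟩ : p.Point)
      (fun i' => (Sum.inr i' : p.Point)) i

lemma fDR_bij : Function.Bijective (fDR p h) := by
  rw [Fintype.bijective_iff_injective_and_card]
  constructor
  · rintro (j₁ | i₁) (j₂ | i₂) heq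
    · have := j₁.isLt
      simp only [fDR, Sum.inl.injEq, Fin.mk.injEq] at heq
      simp only [Sum.inl.injEq]
      exact Fin.ext (by omega)
    · induction i₂ using Fin.lastCases with
      | last =>
        have := j₁.isLt
        simp only [fDR, Fin.lastCases_last, Sum.inl.injEq, Fin.mk.injEq] at heq
        omega
      | cast i' => simp only [fDR, Fin.lastCases_castSucc] at heq; exact absurd heq (by simp)
    · induction i₁ using Fin.lastCases with
      | last =>
        have := j₂.isLt
        simp only [fDR, Fin.lastCases_last, Sum.inl.injEq, Fin.mk.injEq] at heq
        omega
      | cast i' => simp only [fDR, Fin.lastCases_castSucc] at heq; exact absurd heq (by simp)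
    · induction i₁ using Fin.lastCases with
      | last =>
        induction i₂ using Fin.lastCases with
        | last => rfl
        | cast i' => simp only [fDR, Fin.lastCases_last, Fin.lastCases_castSucc] at heq
                     exact absurd heq (by simp)
      | cast i' =>
        induction i₂ using Fin.lastCases with
        | last => simp only [fDR, Fin.lastCases_last, Fin.lastCases_castSucc] at heq
                  exact absurd heq (by simp)
        | cast i'' =>
          simp only [fDR, Fin.lastCases_castSucc, Sum.inr.injEq] at heq
          simp [heq]
  · simp only [Point, qDR, Fintype.card_sum, Fintype.card_fin]
    omega

lemma size_qDR : (qDR p h).size = p.size := by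
  simp only [size, qDR]; omega

lemma posDR (z : (qDR p h).Point) : p.pos (fDR p h z) = (qDR p h).pos z := by
  rcases z with j | i
  · have hj : (j : ℕ) < p.upper - 1 := j.isLt
    simp only [fDR, pos, qDR]
    omega
  · induction i using Fin.lastCases with
    | last =>
      simp only [fDR, Fin.lastCases_last, pos, qDR, Fin.val_last]
      omega
    | cast i' =>
      simp only [fDR, Fin.lastCases_castSucc, pos, qDR, Fin.coe_castSucc]

lemma isoDR : Nonempty (Iso (qDR p h) p) := by
  refine ⟨⟨Equiv.ofBijective _ (fDR_bij p h), fun x y => ?_, fun z => ?_,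
    fun x y => by rcases x with j | i <;> rcases y with j' | i' <;> exact Iff.rfl⟩⟩
  · have hx := posDR p h x
    have hy := posDR p h y
    show p.relpos (fDR p h x) (fDR p h y) = (qDR p h).relpos x y
    simp only [Equiv.ofBijective_apply, relpos, size_qDR, hx, hy]
  · show p.ncolor (fDR p h z) = (qDR p h).ncolor z
    rcases z with j | i
    · simp [fDR, ncolor, qDR]
    · induction i using Fin.lastCases with
      | last => simp [fDR, ncolor, qDR]
      | cast i' => simp [fDR, ncolor, qDR]

end DownR

section UpL
variable (p : TCP) (h : 0 < p.lower)

/-- The explicit form of `rotUpL` in the nontrivial case. -/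
def qUL : TCP :=
  { upper := p.upper + 1
    lower := p.lower - 1
    upColor := fun j => Fin.cases (!(p.loColor ⟨0, h⟩)) (fun j' => p.upColor j') j
    loColor := fun i => p.loColor ⟨i + 1, by have := i.isLt; omega⟩
    rel := Setoid.comap
      (fun x : Fin (p.upper + 1) ⊕ Fin (p.lower - 1) => match x with
        | .inl j => Fin.cases (Sum.inr ⟨0, h⟩ : p.Point) (fun j' => (Sum.inl j' : p.Point)) j
        | .inr i => (Sum.inr ⟨i + 1, by have := i.isLt; omega⟩ : p.Point))
      p.rel }

lemma rotUpL_eq : p.rotUpL = qUL p h := by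
  unfold rotUpL qUL; rw [dif_pos h]

/-- The point identification underlying `rotUpL`. -/
def fUL : Fin (p.upper + 1) ⊕ Fin (p.lower - 1) → p.Point := fun x => match x with
  | .inl j => Fin.cases (Sum.inr ⟨0, h⟩ : p.Point) (fun j' => (Sum.inl j' : p.Point)) j
  | .inr i => (Sum.inr ⟨i + 1, by have := i.isLt; omega⟩ : p.Point)

lemma fUL_bij : Function.Bijective (fUL p h) := by
  rw [Fintype.bijective_iff_injective_and_card]
  constructor
  · rintro (j₁ | i₁) (j₂ | i₂) heq
    · induction j₁ using Fin.cases with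
      | zero =>
        induction j₂ using Fin.cases with
        | zero => rfl
        | succ j' => simp only [fUL, Fin.cases_zero, Fin.cases_succ] at heq
                     exact absurd heq (by simp)
      | succ j' =>
        induction j₂ using Fin.cases with
        | zero => simp only [fUL, Fin.cases_zero, Fin.cases_succ] at heq
                  exact absurd heq (by simp)
        | succ j'' =>
          simp only [fUL, Fin.cases_succ, Sum.inl.injEq] at heq
          simp [heq]
    · induction j₁ using Fin.cases with
      | zero => simp only [fUL, Fin.cases_zero, Sum.inr.injEq, Fin.mk.injEq] at heq; omega
      | succ j' => simp only [fUL, Fin.cases_succ] at heq; exact absurd heq (by simp)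
    · induction j₂ using Fin.cases with
      | zero => simp only [fUL, Fin.cases_zero, Sum.inr.injEq, Fin.mk.injEq] at heq; omega
      | succ j' => simp only [fUL, Fin.cases_succ] at heq; exact absurd heq (by simp)
    · simp only [fUL, Sum.inr.injEq, Fin.mk.injEq] at heq
      simp only [Sum.inr.injEq]
      exact Fin.ext (by omega)
  · simp only [Point, qUL, Fintype.card_sum, Fintype.card_fin]
    omega

lemma size_qUL : (qUL p h).size = p.size := by
  simp only [size, qUL]; omega

lemma posUL (z : (qUL p h).Point) :
    p.pos (fUL p h z) = (qUL p h).pos z + 1 ∨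
      p.pos (fUL p h z) + p.size = (qUL p h).pos z + 1 := by
  rcases z with j | i
  · induction j using Fin.cases with
    | zero =>
      right
      simp only [fUL, Fin.cases_zero, pos, qUL, size, Fin.val_zero]
      omega
    | succ j' =>
      left
      have := j'.isLt
      simp only [fUL, Fin.cases_succ, pos, qUL, Fin.val_succ]
      omega
  · left
    simp only [fUL, pos, qUL]

lemma isoUL : Nonempty (Iso (qUL p h) p) := by
  refine ⟨⟨Equiv.ofBijective _ (fUL_bij p h), fun x y => ?_, fun z => ?_,
    fun x y => by rcases x with j | i <;> rcases y with j' | i' <;> exact Iff.rfl⟩⟩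
  · have hx := posUL p h x
    have hy := posUL p h y
    have bx := pos_lt p (fUL p h x)
    have by' := pos_lt p (fUL p h y)
    have cx := pos_lt (qUL p h) x
    have cy := pos_lt (qUL p h) y
    rw [size_qUL] at cx cy
    show p.relpos (fUL p h x) (fUL p h y) = (qUL p h).relpos x y
    simp only [Equiv.ofBijective_apply, relpos, size_qUL]
    apply mod_eq_of_diff
    omega
  · show p.ncolor (fUL p h z) = (qUL p h).ncolor z
    rcases z with j | i
    · induction j using Fin.cases with
      | zero => simp [fUL, ncolor, qUL]
      | succ j' => simp [fUL, ncolor, qUL]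
    · simp [fUL, ncolor, qUL]

end UpL

section UpR
variable (p : TCP) (h : 0 < p.lower)

/-- The explicit form of `rotUpR` in the nontrivial case. -/
def qUR : TCP :=
  { upper := p.upper + 1
    lower := p.lower - 1
    upColor := fun j =>
      Fin.lastCases (!(p.loColor ⟨p.lower - 1, by omega⟩)) (fun j' => p.upColor j') j
    loColor := fun i => p.loColor ⟨i, by have := i.isLt; omega⟩
    rel := Setoid.comap
      (fun x : Fin (p.upper + 1) ⊕ Fin (p.lower - 1) => match x with
        | .inl j => Fin.lastCases (Sum.inr ⟨p.lower - 1, by omega⟩ : p.Point)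
            (fun j' => (Sum.inl j' : p.Point)) j
        | .inr i => (Sum.inr ⟨i, by have := i.isLt; omega⟩ : p.Point))
      p.rel }

lemma rotUpR_eq : p.rotUpR = qUR p h := by
  unfold rotUpR qUR; rw [dif_pos h]

/-- The point identification underlying `rotUpR`. -/
def fUR : Fin (p.upper + 1) ⊕ Fin (p.lower - 1) → p.Point := fun x => match x with
  | .inl j => Fin.lastCases (Sum.inr ⟨p.lower - 1, by omega⟩ : p.Point)
      (fun j' => (Sum.inl j' : p.Point)) j
  | .inr i => (Sum.inr ⟨i, by have := i.isLt; omega⟩ : p.Point)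

lemma fUR_bij : Function.Bijective (fUR p h) := by
  rw [Fintype.bijective_iff_injective_and_card]
  constructor
  · rintro (j₁ | i₁) (j₂ | i₂) heq
    · induction j₁ using Fin.lastCases with
      | last =>
        induction j₂ using Fin.lastCases with
        | last => rfl
        | cast j' => simp only [fUR, Fin.lastCases_last, Fin.lastCases_castSucc] at heq
                     exact absurd heq (by simp)
      | cast j' =>
        induction j₂ using Fin.lastCases with
        | last => simp only [fUR, Fin.lastCases_last, Fin.lastCases_castSucc] at heq
                  exact absurd heq (by simp)
        | cast j'' =>
          simp only [fUR, Fin.lastCases_castSucc, Sum.inl.injEq] at heq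
          simp [heq]
    · induction j₁ using Fin.lastCases with
      | last =>
        have := i₂.isLt
        simp only [fUR, Fin.lastCases_last, Sum.inr.injEq, Fin.mk.injEq] at heq
        omega
      | cast j' => simp only [fUR, Fin.lastCases_castSucc] at heq; exact absurd heq (by simp)
    · induction j₂ using Fin.lastCases with
      | last =>
        have := i₁.isLt
        simp only [fUR, Fin.lastCases_last, Sum.inr.injEq, Fin.mk.injEq] at heq
        omega
      | cast j' => simp only [fUR, Fin.lastCases_castSucc] at heq; exact absurd heq (by simp)
    · simp only [fUR, Sum.inr.injEq, Fin.mk.injEq] at heq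
      simp only [Sum.inr.injEq]
      exact Fin.ext (by omega)
  · simp only [Point, qUR, Fintype.card_sum, Fintype.card_fin]
    omega

lemma size_qUR : (qUR p h).size = p.size := by
  simp only [size, qUR]; omega

lemma posUR (z : (qUR p h).Point) : p.pos (fUR p h z) = (qUR p h).pos z := by
  rcases z with j | i
  · induction j using Fin.lastCases with
    | last =>
      simp only [fUR, Fin.lastCases_last, pos, qUR, Fin.val_last]
      omega
    | cast j' =>
      have := j'.isLt
      simp only [fUR, Fin.lastCases_castSucc, pos, qUR, Fin.coe_castSucc]
      omega
  · simp only [fUR, pos, qUR]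

lemma isoUR : Nonempty (Iso (qUR p h) p) := by
  refine ⟨⟨Equiv.ofBijective _ (fUR_bij p h), fun x y => ?_, fun z => ?_,
    fun x y => by rcases x with j | i <;> rcases y with j' | i' <;> exact Iff.rfl⟩⟩
  · have hx := posUR p h x
    have hy := posUR p h y
    show p.relpos (fUR p h x) (fUR p h y) = (qUR p h).relpos x y
    simp only [Equiv.ofBijective_apply, relpos, size_qUR, hx, hy]
  · show p.ncolor (fUR p h z) = (qUR p h).ncolor z
    rcases z with j | i
    · induction j using Fin.lastCases with
      | last => simp [fUR, ncolor, qUR]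
      | cast j' => simp [fUR, ncolor, qUR]
    · simp [fUR, ncolor, qUR]

end UpR
end TCP
/-- the analyzer Z is invariant under all four basic rotations. -/
theorem stmt4 (p : TCP) :
    TCP.Z {p.rotDownL} = TCP.Z {p} ∧ TCP.Z {p.rotDownR} = TCP.Z {p} ∧
    TCP.Z {p.rotUpL} = TCP.Z {p} ∧ TCP.Z {p.rotUpR} = TCP.Z {p} := by
  refine ⟨?_, ?_, ?_, ?_⟩
  · by_cases h : 0 < p.upper
    · rw [TCP.rotDownL_eq p h]
      exact (TCP.isoDL p h).some.Z_eq
    · simp only [TCP.rotDownL, dif_neg h]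
  · by_cases h : 0 < p.upper
    · rw [TCP.rotDownR_eq p h]
      exact (TCP.isoDR p h).some.Z_eq
    · simp only [TCP.rotDownR, dif_neg h]
  · by_cases h : 0 < p.lower
    · rw [TCP.rotUpL_eq p h]
      exact (TCP.isoUL p h).some.Z_eq
    · simp only [TCP.rotUpL, dif_neg h]
  · by_cases h : 0 < p.lower
    · rw [TCP.rotUpR_eq p h]
      exact (TCP.isoUR p h).some.Z_eq
    · simp only [TCP.rotUpR, dif_neg h]
end
end

section
/- The set of all two-colored partitions all of whose blocks have at most two legs is a category of two-colored partitions. -/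
noncomputable section
attribute [local instance] Classical.propDecidable

namespace Stmt9Aux

/-- Arithmetic: if `g ∣ 2a`, `g ∣ 2b` but `g ∤ a`, `g ∤ b`, then `g ∣ a - b`. -/
lemma int_arith {g a b : ℤ} (h2a : g ∣ 2 * a) (h2b : g ∣ 2 * b)
    (ha : ¬ g ∣ a) (hb : ¬ g ∣ b) : g ∣ (a - b) := by
  obtain ⟨k, hk⟩ := h2a
  obtain ⟨l, hl⟩ := h2b
  have hko : Odd k := by
    rcases Int.even_or_odd k with ⟨k', rfl⟩ | ho
    · exact absurd ⟨k', by linarith⟩ ha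
    · exact ho
  have hlo : Odd l := by
    rcases Int.even_or_odd l with ⟨l', rfl⟩ | ho
    · exact absurd ⟨l', by linarith⟩ hb
    · exact ho
  obtain ⟨m, hm⟩ := hko.sub_odd hlo
  refine ⟨m, ?_⟩
  have h2 : 2 * (a - b) = 2 * (g * m) := by linear_combination hk - hl + g * hm
  exact mul_left_cancel₀ two_ne_zero h2

/-- The partner function of a setoid: the unique other element of the class, if any. -/
noncomputable def partnerFn {α : Type*} (s : Setoid α) (x : α) : α :=
  if hx : ∃ y, s.r x y ∧ y ≠ x then hx.choose else x

lemma partnerFn_complete {α : Type*} (s : Setoid α)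
    (huniq : ∀ x y z : α, s.r x y → s.r x z → y ≠ x → z ≠ x → y = z)
    {x y : α} (hxy : s.r x y) : y = x ∨ y = partnerFn s x := by
  by_cases hy : y = x
  · exact Or.inl hy
  · have hx : ∃ z, s.r x z ∧ z ≠ x := ⟨y, hxy, hy⟩
    right
    rw [partnerFn, dif_pos hx]
    exact huniq x y hx.choose hxy hx.choose_spec.1 hy hx.choose_spec.2

lemma partnerFn_rel {α : Type*} (s : Setoid α) (x : α) : s.r x (partnerFn s x) := by
  rw [partnerFn]
  split
  · next hx => exact hx.choose_spec.1
  · exact s.refl x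

lemma partnerFn_invol {α : Type*} (s : Setoid α)
    (huniq : ∀ x y z : α, s.r x y → s.r x z → y ≠ x → z ≠ x → y = z) :
    Function.Involutive (partnerFn s) := by
  intro x
  rcases partnerFn_complete s huniq (s.symm (partnerFn_rel s x)) with h | h
  · rw [← h, ← h]
  · exact h.symm

/-- A `TCP` all of whose blocks have at most two legs has the uniqueness property. -/
lemma uniq_of_two (p : TCP) (hp : ∀ B : Finset p.Point, p.IsBlock B → B.card ≤ 2) :
    ∀ x y z : p.Point, p.rel.r x y → p.rel.r x z → y ≠ x → z ≠ x → y = z := by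
  intro x y z hxy hxz hyx hzx
  by_contra hyz
  have hxm : x ∈ p.blockOf x := Finset.mem_filter.2 ⟨Finset.mem_univ _, p.rel.refl x⟩
  have hym : y ∈ p.blockOf x := Finset.mem_filter.2 ⟨Finset.mem_univ _, hxy⟩
  have hzm : z ∈ p.blockOf x := Finset.mem_filter.2 ⟨Finset.mem_univ _, hxz⟩
  have h3 : 2 < (p.blockOf x).card :=
    Finset.two_lt_card.2 ⟨x, hxm, y, hym, z, hzm, Ne.symm hyx, Ne.symm hzx, hyz⟩
  exact absurd (hp _ ⟨x, rfl⟩) (by omega)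

/-- Classes of a comap along an injective map are at most as big as the target classes. -/
lemma comap_card_le {α β : Type*} [Fintype α] [Fintype β] (g : α → β)
    (hg : Function.Injective g) (s : Setoid β)
    (hs : ∀ x : β, (Finset.univ.filter (fun y => s.r x y)).card ≤ 2) (x : α) :
    (Finset.univ.filter (fun y => s.r (g x) (g y))).card ≤ 2 := by
  refine le_trans (Finset.card_le_card_of_injOn g ?_ ?_) (hs (g x))
  · intro a ha
    simp only [Finset.mem_coe, Finset.mem_filter, Finset.mem_univ, true_and] at ha ⊢
    exact ha
  · intro a _ b _ hab
    exact hg hab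

/-- The key abstract lemma: given two involutions `h`, `m` on a finite type and a relation
`r` whose steps are among `id, h, m`, any equivalence class of `EqvGen r` contains at most
two fixed points of `m`. -/
lemma two_invol_classes {M : Type*} [Fintype M] (h m : M → M)
    (hh : Function.Involutive h) (hm : Function.Involutive m)
    (r : M → M → Prop)
    (hr : ∀ x y, r x y → y = x ∨ y = h x ∨ y = m x)
    {v y z : M} (hv : m v = v) (hy : m y = y) (hz : m z = z)
    (hvy : Relation.EqvGen r v y) (hvz : Relation.EqvGen r v z)
    (hyv : y ≠ v) (hzv : z ≠ v) : y = z := by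
  classical
  set H : Equiv.Perm M := Function.Involutive.toPerm h hh with hHdef
  set Mp : Equiv.Perm M := Function.Involutive.toPerm m hm with hMdef
  have hHa : ∀ x, H x = h x := fun _ => rfl
  have hMa : ∀ x, Mp x = m x := fun _ => rfl
  set T : Equiv.Perm M := Mp * H with hTdef
  have hH2 : H * H = 1 := by
    ext w; simp only [Equiv.Perm.mul_apply, Equiv.Perm.one_apply, hHa]; exact hh w
  have hM2 : Mp * Mp = 1 := by
    ext w; simp only [Equiv.Perm.mul_apply, Equiv.Perm.one_apply, hMa]; exact hm w
  have hHinv : H⁻¹ = H := inv_eq_iff_mul_eq_one.2 hH2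
  have hMinv : Mp⁻¹ = Mp := inv_eq_iff_mul_eq_one.2 hM2
  have hTinv : T⁻¹ = H * Mp := by rw [hTdef, mul_inv_rev, hHinv, hMinv]
  -- conjugation identities
  have hconjH : ∀ n : ℤ, H * T ^ n * H = T ^ (-n) := by
    intro n
    have h1 : H * T * H⁻¹ = T⁻¹ := by
      rw [hHinv, hTinv]
      ext w
      show h (m (h (h w))) = h (m w)
      rw [hh w]
    calc H * T ^ n * H = H * T ^ n * H⁻¹ := by rw [hHinv]
      _ = (H * T * H⁻¹) ^ n := conj_zpow.symm
      _ = (T⁻¹) ^ n := by rw [h1]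
      _ = T ^ (-n) := by rw [inv_zpow, ← zpow_neg]
  have hconjM : ∀ n : ℤ, Mp * T ^ n * Mp = T ^ (-n) := by
    intro n
    have h1 : Mp * T * Mp⁻¹ = T⁻¹ := by
      rw [hMinv, hTinv]
      ext w
      show m (m (h (m w))) = h (m w)
      rw [hm (h (m w))]
    calc Mp * T ^ n * Mp = Mp * T ^ n * Mp⁻¹ := by rw [hMinv]
      _ = (Mp * T * Mp⁻¹) ^ n := conj_zpow.symm
      _ = (T⁻¹) ^ n := by rw [h1]
      _ = T ^ (-n) := by rw [inv_zpow, ← zpow_neg]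
  have keyH : ∀ (n : ℤ) (x : M), h ((T ^ n) x) = (T ^ (-n)) (h x) := by
    intro n x
    have := congrArg (fun σ : Equiv.Perm M => σ (h x)) (hconjH n)
    simpa only [Equiv.Perm.mul_apply, hHa, hh x] using this
  have keyM : ∀ (n : ℤ) (x : M), m ((T ^ n) x) = (T ^ (-n)) (m x) := by
    intro n x
    have := congrArg (fun σ : Equiv.Perm M => σ (m x)) (hconjM n)
    simpa only [Equiv.Perm.mul_apply, hMa, hm x] using this
  have tpow_add : ∀ (a b : ℤ) (x : M), (T ^ a) ((T ^ b) x) = (T ^ (a + b)) x := by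
    intro a b x
    rw [← Equiv.Perm.mul_apply, ← zpow_add]
  -- the closure relation
  set R : M → M → Prop := fun x w => ∃ n : ℤ, w = (T ^ n) x ∨ w = (T ^ n) (h x) with hRdef
  have Rrefl : ∀ x, R x x := fun x => ⟨0, Or.inl (by simp)⟩
  have Rsymm : ∀ {x w}, R x w → R w x := by
    rintro x w ⟨n, hw | hw⟩
    · exact ⟨-n, Or.inl (by rw [hw, tpow_add, neg_add_cancel, zpow_zero, Equiv.Perm.one_apply])⟩
    · refine ⟨n, Or.inr ?_⟩
      have : h w = h ((T ^ n) (h x)) := by rw [hw]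
      rw [keyH n (h x), hh x] at this
      have := congrArg (⇑(T ^ n)) this
      rw [tpow_add, add_neg_cancel, zpow_zero, Equiv.Perm.one_apply] at this
      exact this.symm
  have Rtrans : ∀ {x w u}, R x w → R w u → R x u := by
    rintro x w u ⟨n, hw | hw⟩ ⟨k, hu | hu⟩
    · exact ⟨k + n, Or.inl (by rw [hu, hw, tpow_add])⟩
    · refine ⟨k - n, Or.inr ?_⟩
      rw [hu, hw, keyH n x, tpow_add]
      ring_nf
    · exact ⟨k + n, Or.inr (by rw [hu, hw, tpow_add])⟩
    · refine ⟨k - n, Or.inl ?_⟩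
      rw [hu, hw, keyH n (h x), hh x, tpow_add]
      ring_nf
  have Rstep : ∀ x w, r x w → R x w := by
    intro x w hxw
    rcases hr x w hxw with rfl | rfl | rfl
    · exact Rrefl _
    · exact ⟨0, Or.inr (by simp)⟩
    · refine ⟨1, Or.inr ?_⟩
      rw [zpow_one]
      show m x = Mp (H (h x))
      rw [hHa, hMa, hh x]
  have RofEqv : ∀ {x w}, Relation.EqvGen r x w → R x w := by
    intro x w hxw
    induction hxw with
    | rel a b hab => exact Rstep a b hab
    | refl a => exact Rrefl a
    | symm a b _ ih => exact Rsymm ih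
    | trans a b c _ _ ih₁ ih₂ => exact Rtrans ih₁ ih₂
  -- normal form: anything related to the m-fixed point v is a T-power of v
  have hvT : h v = (T ^ (-1 : ℤ)) v := by
    have : (T ^ (-1 : ℤ)) v = (H * Mp) v := by rw [zpow_neg, zpow_one, hTinv]
    rw [this, Equiv.Perm.mul_apply, hMa, hHa, hv]
  have normal : ∀ {w}, R v w → ∃ a : ℤ, w = (T ^ a) v := by
    rintro w ⟨n, hw | hw⟩
    · exact ⟨n, hw⟩
    · exact ⟨n + (-1), by rw [hw, hvT, tpow_add]⟩
  have period : ∀ {w : M} {a : ℤ}, m w = w → w = (T ^ a) v → (T ^ (2 * a)) v = v := by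
    intro w a hwm hwa
    have h1 : m ((T ^ a) v) = (T ^ (-a)) v := by rw [keyM a v, hv]
    have h2 : (T ^ a) v = (T ^ (-a)) v := by rw [← h1, ← hwa, hwm]
    have h3 := congrArg (⇑(T ^ a)) h2
    rw [tpow_add, tpow_add, add_neg_cancel, zpow_zero, Equiv.Perm.one_apply, ← two_mul] at h3
    exact h3
  -- the subgroup of periods of v

  set S : AddSubgroup ℤ :=
    { carrier := {n : ℤ | (T ^ n) v = v}
      zero_mem' := by simp
      add_mem' := by
        intro a b ha hb
        simp only [Set.mem_setOf_eq] at *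
        rw [← tpow_add, hb, ha]
      neg_mem' := by
        intro a ha
        simp only [Set.mem_setOf_eq] at *
        have := congrArg (⇑(T ^ (-a))) ha
        rw [tpow_add, neg_add_cancel, zpow_zero, Equiv.Perm.one_apply] at this
        exact this.symm } with hSdef
  have memS : ∀ n : ℤ, n ∈ S ↔ (T ^ n) v = v := fun n => Iff.rfl
  obtain ⟨g, hg⟩ := Int.subgroup_cyclic S
  have memiff : ∀ n : ℤ, (T ^ n) v = v ↔ g ∣ n := by
    intro n
    rw [← memS, hg, AddSubgroup.mem_closure_singleton]
    constructor
    · rintro ⟨k, hk⟩; exact ⟨k, by rw [← hk, smul_eq_mul]; ring⟩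
    · rintro ⟨k, hk⟩; exact ⟨k, by rw [smul_eq_mul, hk]; ring⟩
  have hg0 : g ≠ 0 := by
    intro h0
    have hK : (T ^ ((orderOf T : ℤ))) v = v := by
      rw [zpow_natCast, pow_orderOf_eq_one, Equiv.Perm.one_apply]
    have := (memiff _).1 hK
    rw [h0] at this
    have h00 := zero_dvd_iff.mp this
    have hpos := orderOf_pos T
    omega
  -- put y and z in normal form
  obtain ⟨a, hay⟩ := normal (RofEqv hvy)
  obtain ⟨b, hbz⟩ := normal (RofEqv hvz)
  have h2a : g ∣ 2 * a := (memiff _).1 (period hy hay)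
  have h2b : g ∣ 2 * b := (memiff _).1 (period hz hbz)
  have hna : ¬ g ∣ a := fun hd => hyv (by rw [hay, (memiff a).2 hd])
  have hnb : ¬ g ∣ b := fun hd => hzv (by rw [hbz, (memiff b).2 hd])
  have hdab : g ∣ a - b := int_arith h2a h2b hna hnb
  have hper : (T ^ (a - b)) v = v := (memiff _).2 hdab
  have hfin := congrArg (⇑(T ^ b)) hper
  rw [tpow_add, show b + (a - b) = a by ring] at hfin
  rw [hay, hbz]
  exact hfin

lemma ptmap_injective (p q : TCP) : Function.Injective (TCP.ptmap p q) := by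
  have shapeL : ∀ j, TCP.ptmap p q (Sum.inl j) =
      Sum.elim (fun a => Sum.inl (Sum.inl a)) (fun a => Sum.inr (Sum.inl a))
        (finSumFinEquiv.symm j) := fun _ => rfl
  have shapeR : ∀ i, TCP.ptmap p q (Sum.inr i) =
      Sum.elim (fun a => Sum.inl (Sum.inr a)) (fun a => Sum.inr (Sum.inr a))
        (finSumFinEquiv.symm i) := fun _ => rfl
  intro x y hxy
  rcases x with j | i <;> rcases y with j' | i'
  · rw [shapeL j, shapeL j'] at hxy
    rcases h1 : finSumFinEquiv.symm j with a | a <;> rcases h2 : finSumFinEquiv.symm j' with b | b <;>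
      rw [h1, h2] at hxy <;>
      simp only [Sum.elim_inl, Sum.elim_inr, Sum.inl.injEq, Sum.inr.injEq,
        reduceCtorEq] at hxy <;>
      exact congrArg Sum.inl (finSumFinEquiv.symm.injective (by rw [h1, h2, hxy]))
  · rw [shapeL j, shapeR i'] at hxy
    rcases h1 : finSumFinEquiv.symm j with a | a <;> rcases h2 : finSumFinEquiv.symm i' with b | b <;>
      rw [h1, h2] at hxy <;>
      simp only [Sum.elim_inl, Sum.elim_inr, Sum.inl.injEq, Sum.inr.injEq,
        reduceCtorEq] at hxy
  · rw [shapeR i, shapeL j'] at hxy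
    rcases h1 : finSumFinEquiv.symm i with a | a <;> rcases h2 : finSumFinEquiv.symm j' with b | b <;>
      rw [h1, h2] at hxy <;>
      simp only [Sum.elim_inl, Sum.elim_inr, Sum.inl.injEq, Sum.inr.injEq,
        reduceCtorEq] at hxy
  · rw [shapeR i, shapeR i'] at hxy
    rcases h1 : finSumFinEquiv.symm i with a | a <;> rcases h2 : finSumFinEquiv.symm i' with b | b <;>
      rw [h1, h2] at hxy <;>
      simp only [Sum.elim_inl, Sum.elim_inr, Sum.inl.injEq, Sum.inr.injEq,
        reduceCtorEq] at hxy <;>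
      exact congrArg Sum.inr (finSumFinEquiv.symm.injective (by rw [h1, h2, hxy]))

lemma sum_classes (p q : TCP) (hp : ∀ B : Finset p.Point, p.IsBlock B → B.card ≤ 2)
    (hq : ∀ B : Finset q.Point, q.IsBlock B → B.card ≤ 2) :
    ∀ w : p.Point ⊕ q.Point,
      (Finset.univ.filter (fun y => (TCP.sumSetoid p.rel q.rel).r w y)).card ≤ 2 := by
  rintro (a | a)
  · refine le_trans (Finset.card_le_card_of_injOn (Sum.elim id fun _ => a) ?_ ?_)
      (hp (p.blockOf a) ⟨a, rfl⟩)
    · rintro (b | b) hy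
      · have hab : p.rel.r a b := (Finset.mem_filter.1 hy).2
        exact Finset.mem_filter.2 ⟨Finset.mem_univ _, hab⟩
      · exact absurd ((Finset.mem_filter.1 hy).2) (fun hf => (hf : False))
    · rintro (b₁ | b₁) hy₁ (b₂ | b₂) hy₂ he
      · exact congrArg Sum.inl he
      · exact absurd ((Finset.mem_filter.1 (Finset.mem_coe.1 hy₂)).2) (fun hf => (hf : False))
      · exact absurd ((Finset.mem_filter.1 (Finset.mem_coe.1 hy₁)).2) (fun hf => (hf : False))
      · exact absurd ((Finset.mem_filter.1 (Finset.mem_coe.1 hy₁)).2) (fun hf => (hf : False))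
  · refine le_trans (Finset.card_le_card_of_injOn (Sum.elim (fun _ => a) id) ?_ ?_)
      (hq (q.blockOf a) ⟨a, rfl⟩)
    · rintro (b | b) hy
      · exact absurd ((Finset.mem_filter.1 hy).2) (fun hf => (hf : False))
      · have hab : q.rel.r a b := (Finset.mem_filter.1 hy).2
        exact Finset.mem_filter.2 ⟨Finset.mem_univ _, hab⟩
    · rintro (b₁ | b₁) hy₁ (b₂ | b₂) hy₂ he
      · exact absurd ((Finset.mem_filter.1 (Finset.mem_coe.1 hy₁)).2) (fun hf => (hf : False))
      · exact absurd ((Finset.mem_filter.1 (Finset.mem_coe.1 hy₁)).2) (fun hf => (hf : False))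
      · exact absurd ((Finset.mem_filter.1 (Finset.mem_coe.1 hy₂)).2) (fun hf => (hf : False))
      · exact congrArg Sum.inr he

end Stmt9Aux


/-- partitions all of whose blocks have at most two legs form a category. -/
theorem stmt9 :
    TCP.IsCategory {p : TCP | ∀ B : Finset p.Point, p.IsBlock B → B.card ≤ 2} := by
  classical
  open Stmt9Aux in
  refine ⟨?_, ?_, ?_, ?_, ?_, ?_, ?_, ?_⟩
  · intro B _
    exact le_trans B.card_le_univ (by simp [Finset.card_univ, TCP.emptyP]; decide)
  · intro B _
    exact le_trans B.card_le_univ (by simp [Finset.card_univ, TCP.idPart]; decide)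
  · intro B _
    exact le_trans B.card_le_univ (by simp [Finset.card_univ, TCP.idPart]; decide)
  · intro B _
    exact le_trans B.card_le_univ (by simp [Finset.card_univ, TCP.lpair])
  · intro B _
    exact le_trans B.card_le_univ (by simp [Finset.card_univ, TCP.lpair])
  -- tensor
  · intro p q hp hq B hB
    obtain ⟨x, rfl⟩ := hB
    exact Stmt9Aux.comap_card_le (TCP.ptmap p q) (Stmt9Aux.ptmap_injective p q)
      (TCP.sumSetoid p.rel q.rel) (Stmt9Aux.sum_classes p q hp hq) x
  -- involution
  · intro p hp B hB
    obtain ⟨x, rfl⟩ := hB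
    exact Stmt9Aux.comap_card_le (Sum.swap : p.invol.Point → p.Point)
      (fun a b hab => by simpa using congrArg Sum.swap hab) p.rel
      (fun w => hp (p.blockOf w) ⟨w, rfl⟩) x
  -- composition
  · intro p q hpq hp hq B hB
    obtain ⟨x₀, rfl⟩ := hB
    set r := TCP.compRel p q hpq.len with hrdef
    have hup := Stmt9Aux.uniq_of_two p hp
    have huq := Stmt9Aux.uniq_of_two q hq
    set fp := Stmt9Aux.partnerFn p.rel with hfpdef
    set fq := Stmt9Aux.partnerFn q.rel with hfqdef
    set hfun : q.Point ⊕ p.Point → q.Point ⊕ p.Point := Sum.map fq fp with hfdef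
    set mfun : q.Point ⊕ p.Point → q.Point ⊕ p.Point := fun w => match w with
      | .inl (.inl j) => .inl (.inl j)
      | .inl (.inr i) => .inr (.inl (Fin.cast hpq.len.symm i))
      | .inr (.inl j) => .inl (.inr (Fin.cast hpq.len j))
      | .inr (.inr i) => .inr (.inr i) with hmdef
    have hhinv : Function.Involutive hfun := by
      rintro (a | a)
      · exact congrArg Sum.inl (Stmt9Aux.partnerFn_invol q.rel huq a)
      · exact congrArg Sum.inr (Stmt9Aux.partnerFn_invol p.rel hup a)
    have hminv : Function.Involutive mfun := by
      rintro ((j | i) | (j | i)) <;> rfl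
    have hmir : ∀ x y, r x y → y = x ∨ y = hfun x ∨ y = mfun x := by
      intro x y hxy
      rcases hxy with ⟨a, b, rfl, rfl, hab⟩ | ⟨a, b, rfl, rfl, hab⟩ | ⟨j, rfl, rfl⟩ | ⟨j, hy, hx⟩
      · rcases Stmt9Aux.partnerFn_complete q.rel huq hab with rfl | rfl
        · exact Or.inl rfl
        · exact Or.inr (Or.inl rfl)
      · rcases Stmt9Aux.partnerFn_complete p.rel hup hab with rfl | rfl
        · exact Or.inl rfl
        · exact Or.inr (Or.inl rfl)
      · exact Or.inr (Or.inr rfl)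
      · subst hy; subst hx
        exact Or.inr (Or.inr rfl)
    set ι : Fin q.upper ⊕ Fin p.lower → q.Point ⊕ p.Point := fun w => match w with
      | .inl j => Sum.inl (Sum.inl j)
      | .inr i => Sum.inr (Sum.inr i) with hidef
    have hι : Function.Injective ι := by
      rintro (a | a) (b | b) hab
      · have h : (Sum.inl (Sum.inl a) : q.Point ⊕ p.Point) = Sum.inl (Sum.inl b) := hab
        simp only [Sum.inl.injEq] at h
        rw [h]
      · exact absurd (show (Sum.inl (Sum.inl a) : q.Point ⊕ p.Point) = Sum.inr (Sum.inr b)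
          from hab) (by simp)
      · exact absurd (show (Sum.inr (Sum.inr a) : q.Point ⊕ p.Point) = Sum.inl (Sum.inl b)
          from hab) (by simp)
      · have h : (Sum.inr (Sum.inr a) : q.Point ⊕ p.Point) = Sum.inr (Sum.inr b) := hab
        simp only [Sum.inr.injEq] at h
        rw [h]
    have mem : ∀ e, e ∈ (TCP.comp p q hpq).blockOf x₀ → Relation.EqvGen r (ι x₀) (ι e) := by
      intro e he
      exact (Finset.mem_filter.1 he).2
    have hmfix : ∀ e : Fin q.upper ⊕ Fin p.lower, mfun (ι e) = ι e := by
      rintro (j | i) <;> rfl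
    by_contra hcard
    push_neg at hcard
    obtain ⟨e₁, he₁, e₂, he₂, e₃, he₃, h12, h13, h23⟩ := Finset.two_lt_card.1 hcard
    have key : ∀ e e', e ∈ (TCP.comp p q hpq).blockOf x₀ → e' ∈ (TCP.comp p q hpq).blockOf x₀ →
        ι e ≠ ι x₀ → ι e' ≠ ι x₀ → ι e = ι e' :=
      fun e e' he he' h1 h2 =>
        Stmt9Aux.two_invol_classes hfun mfun hhinv hminv r hmir (hmfix x₀) (hmfix e) (hmfix e')
          (mem e he) (mem e' he') h1 h2
    rcases eq_or_ne (ι e₁) (ι x₀) with h1 | h1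
    · have h2 : ι e₂ ≠ ι x₀ := fun h => h12 (hι (h1.trans h.symm))
      have h3 : ι e₃ ≠ ι x₀ := fun h => h13 (hι (h1.trans h.symm))
      exact h23 (hι (key e₂ e₃ he₂ he₃ h2 h3))
    · rcases eq_or_ne (ι e₂) (ι x₀) with h2 | h2
      · have h3 : ι e₃ ≠ ι x₀ := fun h => h23 (hι (h2.trans h.symm))
        exact h13 (hι (key e₁ e₃ he₁ he₃ h1 h3))
      · exact h12 (hι (key e₁ e₂ he₁ he₂ h1 h2))
end
end

section
/- The set of all two-colored pair partitions all of whose blocks are neutral (each block has color sum 0) is a category of two-colored partitions. -/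
noncomputable section
attribute [local instance] Classical.propDecidable

/-! ### Auxiliary development for Statement 11 -/

namespace TCP

/-- All blocks have two elements and color sum zero. -/
def Good (p : TCP) : Prop :=
  ∀ x : p.Point, (p.blockOf x).card = 2 ∧ p.csum (p.blockOf x) = 0

lemma mem_blockOf_iff {p : TCP} {x y : p.Point} : y ∈ p.blockOf x ↔ p.rel.r x y := by
  simp [blockOf]

lemma mem_blockOf_self (p : TCP) (x : p.Point) : x ∈ p.blockOf x :=
  mem_blockOf_iff.2 (p.rel.iseqv.refl x)

lemma good_iff (p : TCP) :
    (∀ B : Finset p.Point, p.IsBlock B → B.card = 2 ∧ p.csum B = 0) ↔ p.Good := by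
  constructor
  · intro H x; exact H _ ⟨x, rfl⟩
  · rintro H B ⟨x, rfl⟩; exact H x

lemma sgn_ne_zero (p : TCP) (x : p.Point) : p.sgn x ≠ 0 := by
  unfold sgn; split <;> simp

lemma exists_partner {p : TCP} (hp : p.Good) (x : p.Point) :
    ∃ y, y ≠ x ∧ p.rel.r x y ∧ p.sgn y = - p.sgn x ∧ ∀ z, p.rel.r x z → z = x ∨ z = y := by
  obtain ⟨hc, hs⟩ := hp x
  obtain ⟨y, hy, hyx⟩ := Finset.exists_mem_ne (s := p.blockOf x) (by omega) x
  have hsub : {x, y} ⊆ p.blockOf x :=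
    Finset.insert_subset_iff.2 ⟨mem_blockOf_self p x, Finset.singleton_subset_iff.2 hy⟩
  have hBeq : p.blockOf x = {x, y} := by
    refine (Finset.eq_of_subset_of_card_le hsub ?_).symm
    rw [hc, Finset.card_pair (Ne.symm hyx)]
  rw [hBeq] at hs
  unfold csum at hs
  rw [Finset.sum_pair (Ne.symm hyx)] at hs
  refine ⟨y, hyx, mem_blockOf_iff.1 hy, by linarith, ?_⟩
  intro z hz
  have := mem_blockOf_iff.2 hz
  rw [hBeq] at this
  rcases Finset.mem_insert.1 this with rfl | hz1
  · exact Or.inl rfl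
  · exact Or.inr (Finset.mem_singleton.1 hz1)

/-- The unique partner of a point in a pair partition. -/
noncomputable def partner {p : TCP} (hp : p.Good) (x : p.Point) : p.Point :=
  (exists_partner hp x).choose

lemma partner_ne {p : TCP} (hp : p.Good) (x : p.Point) : partner hp x ≠ x :=
  (exists_partner hp x).choose_spec.1

lemma partner_rel {p : TCP} (hp : p.Good) (x : p.Point) : p.rel.r x (partner hp x) :=
  (exists_partner hp x).choose_spec.2.1

lemma partner_sgn {p : TCP} (hp : p.Good) (x : p.Point) :
    p.sgn (partner hp x) = - p.sgn x :=
  (exists_partner hp x).choose_spec.2.2.1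

lemma rel_eq_or {p : TCP} (hp : p.Good) {x z : p.Point} (hz : p.rel.r x z) :
    z = x ∨ z = partner hp x :=
  (exists_partner hp x).choose_spec.2.2.2 z hz

lemma partner_partner {p : TCP} (hp : p.Good) (x : p.Point) :
    partner hp (partner hp x) = x := by
  rcases rel_eq_or hp (p.rel.iseqv.symm (partner_rel hp x)) with h | h
  · exact absurd h.symm (partner_ne hp x)
  · exact h.symm

lemma top_rel {α : Type*} (x y : α) : (⊤ : Setoid α).r x y := by
  have h : ⇑(⊤ : Setoid α) = ⊤ := Setoid.top_def
  have := congrFun (congrFun h x) y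
  rw [show ((⊤ : α → α → Prop) x y) = True from rfl] at this
  exact this ▸ trivial

/-! ### Base partitions -/

lemma emptyP_good : emptyP.Good := by
  intro x
  rcases x with j | i
  · exact Fin.elim0 j
  · exact Fin.elim0 i

lemma blockOf_top {p : TCP} (hrel : p.rel = ⊤) (x : p.Point) :
    p.blockOf x = Finset.univ := by
  ext y
  simp only [Finset.mem_univ, iff_true, mem_blockOf_iff, hrel]
  have h := top_rel (α := p.Point) x y
  rw [← hrel] at h
  exact h

lemma idPart_good (c : Bool) : (idPart c).Good := by
  intro x
  rw [blockOf_top rfl]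
  constructor
  · simp [idPart]
    rfl
  · unfold csum
    rw [Fintype.sum_sum_type]
    cases c <;> simp [sgn, ncolor, idPart] <;> rfl

lemma lpair_good (c : Bool) : (lpair c (!c)).Good := by
  intro x
  rw [blockOf_top rfl]
  constructor
  · simp [lpair]
    rfl
  · unfold csum
    rw [Fintype.sum_sum_type]
    cases c <;> simp [sgn, ncolor, lpair, Fin.sum_univ_two] <;> rfl

/-! ### Tensor products -/

/-- Inverse of `ptmap`. -/
def tun (p q : TCP) : p.Point ⊕ q.Point → (p.tensor q).Point :=
  Sum.elim (tinl p q) (tinr p q)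

lemma ptmap_tun (p q : TCP) (x : p.Point ⊕ q.Point) : ptmap p q (tun p q x) = x := by
  rcases x with (j | i) | (j | i) <;>
    simp [tun, tinl, tinr, ptmap, finSumFinEquiv_symm_apply_castAdd,
      finSumFinEquiv_symm_apply_natAdd]

lemma tun_ptmap (p q : TCP) (x : (p.tensor q).Point) : tun p q (ptmap p q x) = x := by
  rcases x with j | i
  · have hj := finSumFinEquiv.apply_symm_apply j
    rcases hsym : finSumFinEquiv.symm j with a | a <;> rw [hsym] at hj <;>
      simp only [ptmap, hsym, Sum.elim_inl, Sum.elim_inr, tun, tinl, tinr] <;>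
      simp only [finSumFinEquiv_apply_left, finSumFinEquiv_apply_right] at hj <;>
      rw [hj]
  · have hi := finSumFinEquiv.apply_symm_apply i
    rcases hsym : finSumFinEquiv.symm i with a | a <;> rw [hsym] at hi <;>
      simp only [ptmap, hsym, Sum.elim_inl, Sum.elim_inr, tun, tinl, tinr] <;>
      simp only [finSumFinEquiv_apply_left, finSumFinEquiv_apply_right] at hi <;>
      rw [hi]

lemma tensor_sgn_tinl (p q : TCP) (x : p.Point) :
    (p.tensor q).sgn (tinl p q x) = p.sgn x := by
  rcases x with j | i <;>
    simp [sgn, ncolor, tinl, tensor, finSumFinEquiv_symm_apply_castAdd] <;> rfl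

lemma tensor_sgn_tinr (p q : TCP) (x : q.Point) :
    (p.tensor q).sgn (tinr p q x) = q.sgn x := by
  rcases x with j | i <;>
    simp [sgn, ncolor, tinr, tensor, finSumFinEquiv_symm_apply_natAdd] <;> rfl

lemma tensor_rel_iff (p q : TCP) (x y : (p.tensor q).Point) :
    (p.tensor q).rel.r x y ↔ sumRel p.rel.r q.rel.r (ptmap p q x) (ptmap p q y) :=
  Iff.rfl

lemma tensor_good {p q : TCP} (hp : p.Good) (hq : q.Good) : (p.tensor q).Good := by
  intro x
  rcases hx : ptmap p q x with a | a
  · have key : ∀ y, y ∈ (p.tensor q).blockOf x ↔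
        ∃ b ∈ p.blockOf a, tinl p q b = y := by
      intro y
      rw [mem_blockOf_iff, tensor_rel_iff, hx]
      constructor
      · intro hy
        rcases hyy : ptmap p q y with b | b
        · rw [hyy] at hy
          refine ⟨b, mem_blockOf_iff.2 hy, ?_⟩
          have := tun_ptmap p q y
          rw [hyy] at this
          exact this
        · rw [hyy] at hy; exact hy.elim
      · rintro ⟨b, hb, rfl⟩
        rw [show ptmap p q (tinl p q b) = Sum.inl b from ptmap_tun p q (Sum.inl b)]
        exact mem_blockOf_iff.1 hb
    have ext : (p.tensor q).Point → p.Point := fun y => Sum.elim id (fun _ => a) (ptmap p q y)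
    have hmapsto : ∀ y ∈ (p.tensor q).blockOf x,
        Sum.elim id (fun _ => a) (ptmap p q y) ∈ p.blockOf a := by
      intro y hy
      obtain ⟨b, hb, rfl⟩ := (key y).1 hy
      rw [show ptmap p q (tinl p q b) = Sum.inl b from ptmap_tun p q (Sum.inl b)]
      exact hb
    have hmapsfrom : ∀ b ∈ p.blockOf a, tinl p q b ∈ (p.tensor q).blockOf x :=
      fun b hb => (key _).2 ⟨b, hb, rfl⟩
    have hleft : ∀ y ∈ (p.tensor q).blockOf x,
        tinl p q (Sum.elim id (fun _ => a) (ptmap p q y)) = y := by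
      intro y hy
      obtain ⟨b, _, rfl⟩ := (key y).1 hy
      rw [show ptmap p q (tinl p q b) = Sum.inl b from ptmap_tun p q (Sum.inl b)]
      rfl
    have hright : ∀ b ∈ p.blockOf a,
        Sum.elim id (fun _ => a) (ptmap p q (tinl p q b)) = b := by
      intro b _
      rw [show ptmap p q (tinl p q b) = Sum.inl b from ptmap_tun p q (Sum.inl b)]
      rfl
    have hcompat : ∀ y ∈ (p.tensor q).blockOf x,
        (p.tensor q).sgn y = p.sgn (Sum.elim id (fun _ => a) (ptmap p q y)) := by
      intro y hy
      conv_lhs => rw [← hleft y hy]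
      rw [tensor_sgn_tinl]
    constructor
    · exact (Finset.card_nbij' (fun y => Sum.elim id (fun _ => a) (ptmap p q y))
        (tinl p q) hmapsto hmapsfrom hleft hright).trans (hp a).1
    · exact (Finset.sum_nbij' (g := p.sgn) (fun y => Sum.elim id (fun _ => a) (ptmap p q y))
        (tinl p q) hmapsto hmapsfrom hleft hright hcompat).trans (hp a).2
  · have key : ∀ y, y ∈ (p.tensor q).blockOf x ↔
        ∃ b ∈ q.blockOf a, tinr p q b = y := by
      intro y
      rw [mem_blockOf_iff, tensor_rel_iff, hx]
      constructor
      · intro hy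
        rcases hyy : ptmap p q y with b | b
        · rw [hyy] at hy; exact hy.elim
        · rw [hyy] at hy
          refine ⟨b, mem_blockOf_iff.2 hy, ?_⟩
          have := tun_ptmap p q y
          rw [hyy] at this
          exact this
      · rintro ⟨b, hb, rfl⟩
        rw [show ptmap p q (tinr p q b) = Sum.inr b from ptmap_tun p q (Sum.inr b)]
        exact mem_blockOf_iff.1 hb
    have hmapsto : ∀ y ∈ (p.tensor q).blockOf x,
        Sum.elim (fun _ => a) id (ptmap p q y) ∈ q.blockOf a := by
      intro y hy
      obtain ⟨b, hb, rfl⟩ := (key y).1 hy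
      rw [show ptmap p q (tinr p q b) = Sum.inr b from ptmap_tun p q (Sum.inr b)]
      exact hb
    have hmapsfrom : ∀ b ∈ q.blockOf a, tinr p q b ∈ (p.tensor q).blockOf x :=
      fun b hb => (key _).2 ⟨b, hb, rfl⟩
    have hleft : ∀ y ∈ (p.tensor q).blockOf x,
        tinr p q (Sum.elim (fun _ => a) id (ptmap p q y)) = y := by
      intro y hy
      obtain ⟨b, _, rfl⟩ := (key y).1 hy
      rw [show ptmap p q (tinr p q b) = Sum.inr b from ptmap_tun p q (Sum.inr b)]
      rfl
    have hright : ∀ b ∈ q.blockOf a,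
        Sum.elim (fun _ => a) id (ptmap p q (tinr p q b)) = b := by
      intro b _
      rw [show ptmap p q (tinr p q b) = Sum.inr b from ptmap_tun p q (Sum.inr b)]
      rfl
    have hcompat : ∀ y ∈ (p.tensor q).blockOf x,
        (p.tensor q).sgn y = q.sgn (Sum.elim (fun _ => a) id (ptmap p q y)) := by
      intro y hy
      conv_lhs => rw [← hleft y hy]
      rw [tensor_sgn_tinr]
    constructor
    · exact (Finset.card_nbij' (fun y => Sum.elim (fun _ => a) id (ptmap p q y))
        (tinr p q) hmapsto hmapsfrom hleft hright).trans (hq a).1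
    · exact (Finset.sum_nbij' (g := q.sgn) (fun y => Sum.elim (fun _ => a) id (ptmap p q y))
        (tinr p q) hmapsto hmapsfrom hleft hright hcompat).trans (hq a).2

/-! ### Involution -/

lemma invol_sgn (p : TCP) (y : p.invol.Point) :
    p.invol.sgn y = - p.sgn (Sum.swap y) := by
  rcases y with j | i
  · show p.invol.sgn (Sum.inl j) = - p.sgn (Sum.inr j)
    simp only [sgn, ncolor, invol, Sum.swap_inl]
    by_cases hc : p.loColor j = true <;> simp [hc]
  · show p.invol.sgn (Sum.inr i) = - p.sgn (Sum.inl i)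
    simp only [sgn, ncolor, invol, Sum.swap_inr]
    by_cases hc : p.upColor i = true <;> simp [hc]

lemma invol_rel_iff (p : TCP) (x y : p.invol.Point) :
    p.invol.rel.r x y ↔ p.rel.r (Sum.swap x) (Sum.swap y) :=
  Iff.rfl

lemma invol_good {p : TCP} (hp : p.Good) : p.invol.Good := by
  intro x
  have hmapsto : ∀ y ∈ p.invol.blockOf x, Sum.swap y ∈ p.blockOf (Sum.swap x) := by
    intro y hy
    exact mem_blockOf_iff.2 ((invol_rel_iff p x y).1 (mem_blockOf_iff.1 hy))
  have hmapsfrom : ∀ z ∈ p.blockOf (Sum.swap x), Sum.swap z ∈ p.invol.blockOf x := by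
    intro z hz
    refine mem_blockOf_iff.2 ((invol_rel_iff p x (Sum.swap z)).2 ?_)
    erw [Sum.swap_swap]
    exact mem_blockOf_iff.1 hz
  have hleft : ∀ y ∈ p.invol.blockOf x, Sum.swap (Sum.swap y) = y :=
    fun y _ => Sum.swap_swap y
  have hright : ∀ z ∈ p.blockOf (Sum.swap x), Sum.swap (Sum.swap z) = z :=
    fun z _ => Sum.swap_swap z
  have hzero : ∑ z ∈ p.blockOf (Sum.swap x), - p.sgn z = 0 := by
    rw [Finset.sum_neg_distrib]
    have h2 := (hp (Sum.swap x)).2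
    unfold csum at h2
    rw [h2, neg_zero]
  constructor
  · exact (Finset.card_nbij' Sum.swap Sum.swap hmapsto hmapsfrom hleft hright).trans (hp _).1
  · exact (Finset.sum_nbij' (g := fun z => - p.sgn z) Sum.swap Sum.swap hmapsto hmapsfrom
      hleft hright (fun y _ => invol_sgn p y)).trans hzero
/-! ### Composition -/

section Comp

variable {p q : TCP}

/-- Global partner map on the disjoint union of the points of `q` and `p`. -/
noncomputable def cpi (hp : p.Good) (hq : q.Good) : q.Point ⊕ p.Point → q.Point ⊕ p.Point
  | .inl a => .inl (partner hq a)
  | .inr b => .inr (partner hp b)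

/-- The middle-row matching map. -/
def cmu (heq : p.upper = q.lower) : q.Point ⊕ p.Point → q.Point ⊕ p.Point
  | .inl (.inr j) => .inr (.inl (Fin.cast heq.symm j))
  | .inr (.inl j) => .inl (.inr (Fin.cast heq j))
  | x => x

/-- Outer points: upper points of `q` and lower points of `p`. -/
def COut : q.Point ⊕ p.Point → Prop
  | .inl (.inl _) => True
  | .inr (.inr _) => True
  | _ => False

/-- Sign function on the disjoint union. -/
def cS : q.Point ⊕ p.Point → ℤ := Sum.elim q.sgn p.sgn

/-- Embedding of the points of the composition. -/
def cemb (p q : TCP) : (Fin q.upper ⊕ Fin p.lower) → q.Point ⊕ p.Point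
  | .inl j => .inl (.inl j)
  | .inr i => .inr (.inr i)

lemma comp_rel_iff (h : Composable p q) (x y : (comp p q h).Point) :
    (comp p q h).rel.r x y ↔
      Relation.EqvGen (compRel p q h.len) (cemb p q x) (cemb p q y) := by
  rcases x with j | i <;> rcases y with j' | i' <;> exact Iff.rfl

lemma cemb_out (x : Fin q.upper ⊕ Fin p.lower) : COut (cemb p q x) := by
  rcases x with j | i <;> trivial

lemma cemb_inj : Function.Injective (cemb p q) := by
  rintro (j | i) (j' | i') hh <;>
    simp only [cemb, Sum.inl.injEq, Sum.inr.injEq, reduceCtorEq] at hh <;>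
    exact congrArg _ hh

lemma COut_exists {y : q.Point ⊕ p.Point} (hy : COut y) :
    ∃ z : Fin q.upper ⊕ Fin p.lower, cemb p q z = y := by
  rcases y with (a | a) | (a | a)
  · exact ⟨.inl a, rfl⟩
  · exact hy.elim
  · exact hy.elim
  · exact ⟨.inr a, rfl⟩

lemma comp_sgn (h : Composable p q) (z : (comp p q h).Point) :
    (comp p q h).sgn z = cS (cemb p q z) := by
  rcases z with j | i <;> rfl

lemma cpi_cpi (hp : p.Good) (hq : q.Good) (x : q.Point ⊕ p.Point) :
    cpi hp hq (cpi hp hq x) = x := by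
  rcases x with a | b <;> simp [cpi, partner_partner]

lemma cmu_cmu (heq : p.upper = q.lower) (x : q.Point ⊕ p.Point) :
    cmu heq (cmu heq x) = x := by
  rcases x with (a | j) | (j | b) <;> rfl

lemma cmu_out (heq : p.upper = q.lower) (x : q.Point ⊕ p.Point) (hx : COut x) :
    cmu heq x = x := by
  rcases x with (a | j) | (j | b)
  · rfl
  · exact hx.elim
  · exact hx.elim
  · rfl

lemma cmu_not_out (heq : p.upper = q.lower) (x : q.Point ⊕ p.Point) (hx : ¬ COut x) :
    ¬ COut (cmu heq x) := by
  rcases x with (a | j) | (j | b)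
  · exact absurd trivial hx
  · exact fun hh => hh
  · exact fun hh => hh
  · exact absurd trivial hx

lemma cS_cpi (hp : p.Good) (hq : q.Good) (x : q.Point ⊕ p.Point) :
    cS (cpi hp hq x) = - cS x := by
  rcases x with a | b <;> simp [cS, cpi, partner_sgn]

lemma cS_ne_zero (x : q.Point ⊕ p.Point) : cS x ≠ 0 := by
  rcases x with a | b
  · exact sgn_ne_zero q a
  · exact sgn_ne_zero p b

lemma cS_cmu (h : Composable p q) (x : q.Point ⊕ p.Point) (hx : ¬ COut x) :
    cS (cmu h.len x) = - cS x := by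
  rcases x with (a | j) | (j | b)
  · exact absurd trivial hx
  · show p.sgn (.inl (Fin.cast h.len.symm j)) = - q.sgn (.inr j)
    have hcol := h.col (Fin.cast h.len.symm j)
    have hcast : Fin.cast h.len (Fin.cast h.len.symm j) = j := rfl
    rw [hcast] at hcol
    simp only [sgn, ncolor, hcol]
    by_cases hc : q.loColor j = true <;> simp [hc]
  · show q.sgn (.inr (Fin.cast h.len j)) = - p.sgn (.inl j)
    have hcol := h.col j
    simp only [sgn, ncolor, hcol]
    by_cases hc : q.loColor (Fin.cast h.len j) = true <;> simp [hc]
  · exact absurd trivial hx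

lemma R_cpi (h : Composable p q) (hp : p.Good) (hq : q.Good) (x : q.Point ⊕ p.Point) :
    compRel p q h.len x (cpi hp hq x) := by
  rcases x with a | b
  · exact Or.inl ⟨a, partner hq a, rfl, rfl, partner_rel hq a⟩
  · exact Or.inr (Or.inl ⟨b, partner hp b, rfl, rfl, partner_rel hp b⟩)

lemma R_cmu (h : Composable p q) (x : q.Point ⊕ p.Point) (hx : ¬ COut x) :
    compRel p q h.len x (cmu h.len x) := by
  rcases x with (a | j) | (j | b)
  · exact absurd trivial hx
  · exact Or.inr (Or.inr (Or.inl ⟨Fin.cast h.len.symm j, rfl, rfl⟩))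
  · exact Or.inr (Or.inr (Or.inr ⟨j, rfl, rfl⟩))
  · exact absurd trivial hx

lemma R_symm {heq : p.upper = q.lower} {x y : q.Point ⊕ p.Point}
    (hr : compRel p q heq x y) : compRel p q heq y x := by
  rcases hr with ⟨a, b, rfl, rfl, hab⟩ | ⟨a, b, rfl, rfl, hab⟩ | ⟨j, rfl, rfl⟩ | ⟨j, rfl, rfl⟩
  · exact Or.inl ⟨b, a, rfl, rfl, q.rel.iseqv.symm hab⟩
  · exact Or.inr (Or.inl ⟨b, a, rfl, rfl, p.rel.iseqv.symm hab⟩)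
  · exact Or.inr (Or.inr (Or.inr ⟨j, rfl, rfl⟩))
  · exact Or.inr (Or.inr (Or.inl ⟨j, rfl, rfl⟩))

lemma R_elim (h : Composable p q) (hp : p.Good) (hq : q.Good) {x y : q.Point ⊕ p.Point}
    (hr : compRel p q h.len x y) :
    y = x ∨ y = cpi hp hq x ∨ y = cmu h.len x := by
  rcases hr with ⟨a, b, rfl, rfl, hab⟩ | ⟨a, b, rfl, rfl, hab⟩ | ⟨j, rfl, rfl⟩ | ⟨j, rfl, rfl⟩
  · rcases rel_eq_or hq hab with rfl | rfl
    · exact Or.inl rfl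
    · exact Or.inr (Or.inl rfl)
  · rcases rel_eq_or hp hab with rfl | rfl
    · exact Or.inl rfl
    · exact Or.inr (Or.inl rfl)
  · exact Or.inr (Or.inr rfl)
  · exact Or.inr (Or.inr rfl)

end Comp
theorem comp_good {p q : TCP} (h : Composable p q) (hp : p.Good) (hq : q.Good) :
    (comp p q h).Good := by
  classical
  intro x
  set R := compRel p q h.len with hRdef
  set F : q.Point ⊕ p.Point → q.Point ⊕ p.Point :=
    fun z => cmu h.len (cpi hp hq z) with hF
  have hFinj : Function.Injective F := by
    intro a b hab
    have h1 := congrArg (cmu h.len) hab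
    rw [show cmu h.len (F a) = cpi hp hq a from cmu_cmu h.len _,
      show cmu h.len (F b) = cpi hp hq b from cmu_cmu h.len _] at h1
    have h2 := congrArg (cpi hp hq) h1
    rwa [cpi_cpi hp hq, cpi_cpi hp hq] at h2
  set u : q.Point ⊕ p.Point := cemb p q x with hu
  have hu_out : COut u := cemb_out (p := p) (q := q) x
  -- every iterate is reachable from `u`
  have hreach : ∀ k, Relation.EqvGen R u (F^[k] u) := by
    intro k
    induction k with
    | zero => exact Relation.EqvGen.refl u
    | succ k ih =>
      refine Relation.EqvGen.trans _ _ _ ih ?_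
      rw [Function.iterate_succ_apply']
      refine Relation.EqvGen.trans _ _ _
        (Relation.EqvGen.rel _ _ (R_cpi h hp hq (F^[k] u))) ?_
      by_cases hout : COut (cpi hp hq (F^[k] u))
      · rw [show F (F^[k] u) = cmu h.len (cpi hp hq (F^[k] u)) from rfl,
          cmu_out h.len _ hout]
        exact Relation.EqvGen.refl _
      · exact Relation.EqvGen.rel _ _ (R_cmu h _ hout)
  -- the orbit of `u` is periodic
  have hper : ∃ m, 0 < m ∧ F^[m] u = u := by
    obtain ⟨i, j, hij, hije⟩ := Finite.exists_ne_map_eq_of_infinite (fun k : ℕ => F^[k] u)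
    rcases Nat.lt_or_ge i j with hlt | hge
    · refine ⟨j - i, by omega, ?_⟩
      have h1 : F^[i] (F^[j - i] u) = F^[i] u := by
        rw [← Function.iterate_add_apply, show i + (j - i) = j by omega]
        exact hije.symm
      exact hFinj.iterate i h1
    · have hlt : j < i := by omega
      refine ⟨i - j, by omega, ?_⟩
      have h1 : F^[j] (F^[i - j] u) = F^[j] u := by
        rw [← Function.iterate_add_apply, show j + (i - j) = i by omega]
        exact hije
      exact hFinj.iterate j h1
  -- there is an exit point
  have hexit : ∃ k, COut (cpi hp hq (F^[k] u)) := by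
    by_contra hcon
    push_neg at hcon
    obtain ⟨m, hm, hmu⟩ := hper
    have hmid : ¬ COut (F^[m] u) := by
      obtain ⟨m', rfl⟩ : ∃ m', m = m' + 1 := ⟨m - 1, by omega⟩
      rw [Function.iterate_succ_apply']
      exact cmu_not_out h.len _ (hcon m')
    rw [hmu] at hmid
    exact hmid hu_out
  set k₀ := Nat.find hexit with hk₀
  set v := cpi hp hq (F^[k₀] u) with hv
  have hv_out : COut v := Nat.find_spec hexit
  have hmin : ∀ k, k < k₀ → ¬ COut (cpi hp hq (F^[k] u)) := fun k hk => Nat.find_min hexit hk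
  have F1 : ∀ k, 0 < k → k ≤ k₀ → ¬ COut (F^[k] u) := by
    intro k hk1 hk2
    obtain ⟨k', rfl⟩ : ∃ k', k = k' + 1 := ⟨k - 1, by omega⟩
    rw [Function.iterate_succ_apply']
    exact cmu_not_out h.len _ (hmin k' (by omega))
  have F2 : ∀ k, k ≤ k₀ → cS (F^[k] u) = cS u := by
    intro k hk
    induction k with
    | zero => rfl
    | succ k ih =>
      rw [Function.iterate_succ_apply']
      have hmid := hmin k (by omega)
      calc cS (F (F^[k] u)) = cS (cmu h.len (cpi hp hq (F^[k] u))) := rfl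
        _ = - cS (cpi hp hq (F^[k] u)) := cS_cmu h _ hmid
        _ = - - cS (F^[k] u) := by rw [cS_cpi hp hq]
        _ = cS u := by rw [neg_neg, ih (by omega)]
  have hsv : cS v = - cS u := by rw [hv, cS_cpi hp hq, F2 k₀ le_rfl]
  have hvu : v ≠ u := by
    intro hvu
    rw [hvu] at hsv
    have h0 : cS u = 0 := by linarith
    exact cS_ne_zero u h0
  have F4 : ∀ j, j ≤ k₀ → F^[k₀ + 1 + j] u = cpi hp hq (F^[k₀ - j] u) := by
    intro j hj
    induction j with
    | zero =>
      rw [Nat.add_zero, Nat.sub_zero, Function.iterate_succ_apply']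
      rw [show F (F^[k₀] u) = cmu h.len (cpi hp hq (F^[k₀] u)) from rfl]
      exact cmu_out h.len _ hv_out
    | succ j ih =>
      have hj' : j ≤ k₀ := by omega
      rw [show k₀ + 1 + (j + 1) = (k₀ + 1 + j) + 1 from by omega,
        Function.iterate_succ_apply', ih hj']
      rw [show F (cpi hp hq (F^[k₀ - j] u)) =
        cmu h.len (cpi hp hq (cpi hp hq (F^[k₀ - j] u))) from rfl]
      rw [cpi_cpi hp hq]
      rw [show k₀ - j = (k₀ - (j + 1)) + 1 from by omega, Function.iterate_succ_apply']
      rw [show F (F^[k₀ - (j+1)] u) = cmu h.len (cpi hp hq (F^[k₀ - (j+1)] u)) from rfl]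
      rw [cmu_cmu h.len]
  have F5 : F^[2 * k₀ + 2] u = u := by
    have h1 : F^[2 * k₀ + 1] u = cpi hp hq u := by
      have h2 := F4 k₀ le_rfl
      rw [Nat.sub_self, Function.iterate_zero_apply] at h2
      rw [show 2 * k₀ + 1 = k₀ + 1 + k₀ from by omega]
      exact h2
    rw [show 2 * k₀ + 2 = (2 * k₀ + 1) + 1 from by omega, Function.iterate_succ_apply', h1]
    rw [show F (cpi hp hq u) = cmu h.len (cpi hp hq (cpi hp hq u)) from rfl]
    rw [cpi_cpi hp hq]
    exact cmu_out h.len _ hu_out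
  have Fper : ∀ k, F^[k] u = F^[k % (2 * k₀ + 2)] u := by
    intro k
    conv_lhs => rw [← Nat.div_add_mod k (2 * k₀ + 2)]
    generalize k / (2 * k₀ + 2) = d
    induction d with
    | zero => rw [Nat.mul_zero, Nat.zero_add]
    | succ d ih =>
      rw [Nat.mul_succ,
        show (2 * k₀ + 2) * d + (2 * k₀ + 2) + k % (2 * k₀ + 2)
          = ((2 * k₀ + 2) * d + k % (2 * k₀ + 2)) + (2 * k₀ + 2) from by omega,
        Function.iterate_add_apply, F5]
      exact ih
  -- closure properties of the orbit
  have hTpi : ∀ y, (∃ k, y = F^[k] u ∨ y = cpi hp hq (F^[k] u)) →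
      (∃ k, cpi hp hq y = F^[k] u ∨ cpi hp hq y = cpi hp hq (F^[k] u)) := by
    rintro y ⟨k, rfl | rfl⟩
    · exact ⟨k, Or.inr rfl⟩
    · exact ⟨k, Or.inl (by rw [cpi_cpi hp hq])⟩
  have hTmu : ∀ y, (∃ k, y = F^[k] u ∨ y = cpi hp hq (F^[k] u)) →
      (∃ k, cmu h.len y = F^[k] u ∨ cmu h.len y = cpi hp hq (F^[k] u)) := by
    rintro y ⟨k, rfl | rfl⟩
    · rcases k with _ | k'
      · exact ⟨0, Or.inl (cmu_out h.len _ hu_out)⟩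
      · refine ⟨k', Or.inr ?_⟩
        rw [Function.iterate_succ_apply']
        rw [show F (F^[k'] u) = cmu h.len (cpi hp hq (F^[k'] u)) from rfl]
        rw [cmu_cmu h.len]
    · refine ⟨k + 1, Or.inl ?_⟩
      rw [Function.iterate_succ_apply']
  have hTu : ∃ k, u = F^[k] u ∨ u = cpi hp hq (F^[k] u) := ⟨0, Or.inl rfl⟩
  have hclass : ∀ a b, Relation.EqvGen R a b →
      ((∃ k, a = F^[k] u ∨ a = cpi hp hq (F^[k] u)) ↔
        (∃ k, b = F^[k] u ∨ b = cpi hp hq (F^[k] u))) := by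
    intro a b hab
    induction hab with
    | rel a b hr =>
      constructor
      · intro ha
        rcases R_elim h hp hq hr with rfl | rfl | rfl
        · exact ha
        · exact hTpi _ ha
        · exact hTmu _ ha
      · intro hb
        rcases R_elim h hp hq (R_symm hr) with rfl | rfl | rfl
        · exact hb
        · exact hTpi _ hb
        · exact hTmu _ hb
    | refl => exact Iff.rfl
    | symm _ _ _ ih => exact ih.symm
    | trans _ _ _ _ _ ih1 ih2 => exact ih1.trans ih2
  -- outer points of the orbit
  have houter : ∀ y, (∃ k, y = F^[k] u ∨ y = cpi hp hq (F^[k] u)) → COut y →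
      y = u ∨ y = v := by
    rintro y ⟨k, rfl | rfl⟩ hout
    · rw [Fper k] at hout ⊢
      set r := k % (2 * k₀ + 2) with hr
      have hrlt : r < 2 * k₀ + 2 := Nat.mod_lt _ (by omega)
      rcases Nat.lt_or_ge r (k₀ + 1) with hcase | hcase
      · rcases Nat.eq_zero_or_pos r with hz | hrpos
        · left; rw [hz]; rfl
        · exact absurd hout (F1 r hrpos (by omega))
      · rcases Nat.eq_or_lt_of_le hcase with heq | hlt
        · right
          rw [← heq]
          have h40 := F4 0 (Nat.zero_le _)
          rw [Nat.add_zero, Nat.sub_zero] at h40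
          rw [h40, ← hv]
        · exfalso
          have hj : r - (k₀ + 1) ≤ k₀ := by omega
          have h4 := F4 (r - (k₀ + 1)) hj
          rw [show k₀ + 1 + (r - (k₀ + 1)) = r from by omega] at h4
          rw [h4] at hout
          exact hmin (k₀ - (r - (k₀ + 1))) (by omega) hout
    · rw [Fper k] at hout ⊢
      set r := k % (2 * k₀ + 2) with hr
      have hrlt : r < 2 * k₀ + 2 := Nat.mod_lt _ (by omega)
      rcases Nat.lt_trichotomy r k₀ with hlt | heq | hgt
      · exact absurd hout (hmin r hlt)
      · right; rw [heq, ← hv]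
      · have hj : r - (k₀ + 1) ≤ k₀ := by omega
        have h4 := F4 (r - (k₀ + 1)) hj
        rw [show k₀ + 1 + (r - (k₀ + 1)) = r from by omega] at h4
        have h5 : cpi hp hq (F^[r] u) = F^[k₀ - (r - (k₀ + 1))] u := by
          rw [h4, cpi_cpi hp hq]
        rw [h5] at hout ⊢
        rcases Nat.eq_zero_or_pos (k₀ - (r - (k₀ + 1))) with hz | hpos
        · left; rw [hz]; rfl
        · exact absurd hout (F1 _ hpos (by omega))
  -- wrap up
  obtain ⟨x', hx'⟩ := COut_exists hv_out
  have hx'x : x' ≠ x := by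
    intro hh
    rw [hh] at hx'
    exact hvu (hx'.symm.trans hu.symm)
  have hvT : ∃ k, v = F^[k] u ∨ v = cpi hp hq (F^[k] u) := ⟨k₀, Or.inr rfl⟩
  have hBeq : (comp p q h).blockOf x =
      insert x (@singleton (comp p q h).Point (Finset (comp p q h).Point) _ x') := by
    ext y
    rw [mem_blockOf_iff, comp_rel_iff h]
    constructor
    · intro hy
      have hyT := (hclass _ _ hy).1 hTu
      rcases houter _ hyT (cemb_out (p := p) (q := q) y) with hc | hc
      · have : y = x := cemb_inj (p := p) (q := q) (hc.trans hu)
        rw [this]; exact Finset.mem_insert_self x {x'}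
      · have : y = x' := cemb_inj (p := p) (q := q) (hc.trans hx'.symm)
        rw [this]
        exact Finset.mem_insert_of_mem (Finset.mem_singleton_self x')
    · intro hy
      rcases Finset.mem_insert.1 hy with rfl | hy1
      · exact Relation.EqvGen.refl _
      · rw [Finset.mem_singleton.1 hy1, hx']
        exact Relation.EqvGen.trans _ _ _ (hreach k₀)
          (Relation.EqvGen.rel _ _ (R_cpi h hp hq (F^[k₀] u)))
  constructor
  · rw [hBeq]
    exact Finset.card_pair (Ne.symm hx'x)
  · rw [hBeq]
    unfold csum
    rw [Finset.sum_pair (ι := (comp p q h).Point) (Ne.symm hx'x),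
      comp_sgn h x, comp_sgn h x', hx', ← hu, hsv]
    ring
end TCP
/-- pair partitions with neutral blocks form a category. -/
theorem stmt11 :
    TCP.IsCategory {p : TCP | ∀ B : Finset p.Point, p.IsBlock B →
      B.card = 2 ∧ p.csum B = 0} := by
  have hset : ∀ p : TCP,
      p ∈ {p : TCP | ∀ B : Finset p.Point, p.IsBlock B → B.card = 2 ∧ p.csum B = 0} ↔
        p.Good := fun p => TCP.good_iff p
  refine ⟨?_, ?_, ?_, ?_, ?_, ?_, ?_, ?_⟩
  · exact (hset _).2 TCP.emptyP_good
  · exact (hset _).2 (TCP.idPart_good true)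
  · exact (hset _).2 (TCP.idPart_good false)
  · exact (hset _).2 (TCP.lpair_good true)
  · exact (hset _).2 (TCP.lpair_good false)
  · intro p q hp hq
    exact (hset _).2 (TCP.tensor_good ((hset p).1 hp) ((hset q).1 hq))
  · intro p hp
    exact (hset _).2 (TCP.invol_good ((hset p).1 hp))
  · intro p q hco hp hq
    exact (hset _).2 (TCP.comp_good hco ((hset p).1 hp) ((hset q).1 hq))
end
end
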